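/- arXiv:2111.04652 — 2 statements merged into one kernel-verified Lean document; each statement's English description precedes it below -/
import Mathlib

section
/- Suppose β ∈ ℝ^p is s-sparse and let B = β ⊗ β. Then for every matrix A ∈ ℝ^{p×p}, there exists a subgradient W ∈ ∂‖B‖_{Γ_s} of the mixed atomic norm at B such that ⟨W, A⟩ ≥ (1/10)·‖A‖_{Γ_s} − 5·‖A‖_F. -/
open MeasureTheory ProbabilityTheory Finset

noncomputable section

/-- Vectors in ℝ^p. -/
abbrev Vec (p : ℕ) := Fin p → ℝ

/-- p × p real matrices. -/
abbrev Mat (p : ℕ) := Matrix (Fin p) (Fin p) ℝ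

/-- Euclidean (ℓ2) norm. -/
def l2 {p : ℕ} (u : Vec p) : ℝ := Real.sqrt (∑ i, (u i) ^ 2)

/-- ℓ1 norm. -/
def l1 {p : ℕ} (u : Vec p) : ℝ := ∑ i, |u i|

/-- Euclidean inner product. -/
def dotp {p : ℕ} (u v : Vec p) : ℝ := ∑ i, u i * v i

/-- θ_s(u,v) = (‖u‖₂ + s^{-1/2}‖u‖₁)(‖v‖₂ + s^{-1/2}‖v‖₁). -/
def theta {p : ℕ} (s : ℝ) (u v : Vec p) : ℝ :=
  (l2 u + (Real.sqrt s)⁻¹ * l1 u) * (l2 v + (Real.sqrt s)⁻¹ * l1 v)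

/-- Frobenius (Hilbert–Schmidt) inner product. -/
def frob {p : ℕ} (A B : Mat p) : ℝ := ∑ i, ∑ j, A i j * B i j

/-- Frobenius norm. -/
def frobNorm {p : ℕ} (A : Mat p) : ℝ := Real.sqrt (frob A A)

/-- The mixed atomic norm ‖B‖_{Γ_s}. -/
def mixedNorm {p : ℕ} (s : ℝ) (B : Mat p) : ℝ :=
  sInf { t | ∃ (K : ℕ) (u v : Fin K → Vec p),
    B = ∑ k, Matrix.vecMulVec (u k) (v k) ∧ t = ∑ k, theta s (u k) (v k) }

/-- Dual norm of the mixed atomic norm. -/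
def dualMixedNorm {p : ℕ} (s : ℝ) (Z : Mat p) : ℝ :=
  sSup { t | ∃ B : Mat p, mixedNorm s B ≤ 1 ∧ t = frob Z B }

/-- A vector is `s`-sparse if it has at most `s` nonzero entries. -/
def IsSparse {p : ℕ} (s : ℕ) (u : Vec p) : Prop := {i | u i ≠ 0}.ncard ≤ s

/-- Nuclear norm of a real matrix: the sum of its singular values. -/
def nuclearNorm {p : ℕ} (A : Mat p) : ℝ :=
  ∑ i, Real.sqrt ((show (A.transpose * A).IsHermitian by
    simpa using Matrix.isHermitian_conjTranspose_mul_self A).eigenvalues i)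

/-- Operator (spectral) norm of a real matrix. -/
def opNorm {p : ℕ} (A : Mat p) : ℝ :=
  sSup { t | ∃ u v : Vec p, l2 u ≤ 1 ∧ l2 v ≤ 1 ∧ t = dotp (A.mulVec u) v }

/-- `X` has sub-Gaussian (ψ₂) norm at most `K`: `E exp(X²/K²) ≤ 2`. -/
def HasSubgaussianNorm {Ω : Type*} [MeasurableSpace Ω] (μ : Measure Ω) (X : Ω → ℝ) (K : ℝ) :
    Prop := ∫ ω, Real.exp ((X ω) ^ 2 / K ^ 2) ∂μ ≤ 2

/-- `W` is a subgradient of the mixed atomic norm `‖·‖_{Γ_s}` at `B`. -/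
def InSubdiff {p : ℕ} (s : ℝ) (W B : Mat p) : Prop :=
  ∀ C : Mat p, mixedNorm s B + frob W (C - B) ≤ mixedNorm s C

section Aux

variable {p : ℕ}

lemma l2_nonneg (u : Vec p) : 0 ≤ l2 u := Real.sqrt_nonneg _

lemma l2_sq (u : Vec p) : l2 u ^ 2 = ∑ i, u i ^ 2 :=
  Real.sq_sqrt (by positivity)

lemma l1_nonneg (u : Vec p) : 0 ≤ l1 u := Finset.sum_nonneg fun i _ => abs_nonneg _

lemma l2_neg (u : Vec p) : l2 (-u) = l2 u := by
  simp [l2]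

lemma l1_neg (u : Vec p) : l1 (-u) = l1 u := by
  simp [l1]

lemma l2_smul (c : ℝ) (u : Vec p) : l2 (c • u) = |c| * l2 u := by
  unfold l2
  rw [← Real.sqrt_sq_eq_abs, ← Real.sqrt_mul (sq_nonneg c)]
  congr 1
  rw [Finset.mul_sum]
  refine Finset.sum_congr rfl fun i _ => ?_
  simp [Pi.smul_apply, smul_eq_mul]; ring

lemma l1_smul (c : ℝ) (u : Vec p) : l1 (c • u) = |c| * l1 u := by
  unfold l1
  rw [Finset.mul_sum]
  refine Finset.sum_congr rfl fun i _ => ?_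
  simp [Pi.smul_apply, smul_eq_mul, abs_mul]

lemma dotp_le_l2 (u v : Vec p) : dotp u v ≤ l2 u * l2 v :=
  Real.sum_mul_le_sqrt_mul_sqrt _ _ _

lemma dotp_neg_left (u v : Vec p) : dotp (-u) v = -dotp u v := by
  simp [dotp]

lemma abs_dotp_le_l2 (u v : Vec p) : |dotp u v| ≤ l2 u * l2 v := by
  rcases abs_cases (dotp u v) with ⟨h, _⟩ | ⟨h, _⟩
  · rw [h]; exact dotp_le_l2 u v
  · rw [h, ← dotp_neg_left]
    calc dotp (-u) v ≤ l2 (-u) * l2 v := dotp_le_l2 _ _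
    _ = l2 u * l2 v := by rw [l2_neg]

lemma l2_add_le (u v : Vec p) : l2 (u + v) ≤ l2 u + l2 v := by
  have h : ∑ i, (u i + v i) ^ 2 ≤ (l2 u + l2 v) ^ 2 := by
    have hd := dotp_le_l2 u v
    have h2u := l2_sq u
    have h2v := l2_sq v
    have hexp : ∑ i, (u i + v i) ^ 2 = (∑ i, u i ^ 2) + 2 * dotp u v + ∑ i, v i ^ 2 := by
      unfold dotp
      rw [Finset.mul_sum, ← Finset.sum_add_distrib, ← Finset.sum_add_distrib]
      refine Finset.sum_congr rfl fun i _ => by ring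
    have h0u := l2_nonneg u
    have h0v := l2_nonneg v
    nlinarith [hd, h2u, h2v]
  calc l2 (u + v) = Real.sqrt (∑ i, (u i + v i) ^ 2) := by simp [l2]
  _ ≤ Real.sqrt ((l2 u + l2 v) ^ 2) := Real.sqrt_le_sqrt h
  _ = l2 u + l2 v := Real.sqrt_sq (by have := l2_nonneg u; have := l2_nonneg v; linarith)

lemma sum_filter_abs_le_l2 (T : Finset (Fin p)) (g : Vec p) :
    ∑ j ∈ T, |g j| ≤ Real.sqrt T.card * l2 g := by
  have h1 : ∑ j ∈ T, |g j| = ∑ j ∈ T, 1 * |g j| := by simp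
  rw [h1]
  calc ∑ j ∈ T, 1 * |g j| ≤ Real.sqrt (∑ _j ∈ T, (1:ℝ) ^ 2) * Real.sqrt (∑ j ∈ T, |g j| ^ 2) :=
        Real.sum_mul_le_sqrt_mul_sqrt _ _ _
  _ ≤ Real.sqrt T.card * l2 g := by
      refine mul_le_mul ?_ ?_ (Real.sqrt_nonneg _) (Real.sqrt_nonneg _)
      · simp
      · unfold l2
        refine Real.sqrt_le_sqrt ?_
        calc ∑ j ∈ T, |g j| ^ 2 = ∑ j ∈ T, g j ^ 2 := by simp [sq_abs]
        _ ≤ ∑ j, g j ^ 2 := Finset.sum_le_sum_of_subset_of_nonneg (Finset.subset_univ T)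
            (fun i _ _ => sq_nonneg _)

lemma theta_nonneg (s : ℝ) (u v : Vec p) : 0 ≤ theta s u v := by
  unfold theta
  have h1 : (0:ℝ) ≤ (Real.sqrt s)⁻¹ := inv_nonneg.mpr (Real.sqrt_nonneg s)
  have h2 := l2_nonneg u; have h3 := l1_nonneg u
  have h4 := l2_nonneg v; have h5 := l1_nonneg v
  have := mul_nonneg h1 h3
  have := mul_nonneg h1 h5
  exact mul_nonneg (by linarith) (by linarith)

end Aux

section Frob

variable {p : ℕ}

lemma frob_add_left (W1 W2 M : Mat p) : frob (W1 + W2) M = frob W1 M + frob W2 M := by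
  unfold frob
  rw [← Finset.sum_add_distrib]
  refine Finset.sum_congr rfl fun i _ => ?_
  rw [← Finset.sum_add_distrib]
  refine Finset.sum_congr rfl fun j _ => ?_
  simp [Matrix.add_apply]; ring

lemma frob_sub_left (W1 W2 M : Mat p) : frob (W1 - W2) M = frob W1 M - frob W2 M := by
  unfold frob
  rw [← Finset.sum_sub_distrib]
  refine Finset.sum_congr rfl fun i _ => ?_
  rw [← Finset.sum_sub_distrib]
  refine Finset.sum_congr rfl fun j _ => ?_
  simp [Matrix.sub_apply]; ring

lemma frob_smul_left (c : ℝ) (W M : Mat p) : frob (c • W) M = c * frob W M := by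
  unfold frob
  rw [Finset.mul_sum]
  refine Finset.sum_congr rfl fun i _ => ?_
  rw [Finset.mul_sum]
  refine Finset.sum_congr rfl fun j _ => ?_
  simp [Matrix.smul_apply]; ring

lemma frob_sub_right (W C B : Mat p) : frob W (C - B) = frob W C - frob W B := by
  unfold frob
  rw [← Finset.sum_sub_distrib]
  refine Finset.sum_congr rfl fun i _ => ?_
  rw [← Finset.sum_sub_distrib]
  refine Finset.sum_congr rfl fun j _ => ?_
  simp [Matrix.sub_apply]; ring

lemma frob_sum_right {K : ℕ} (W : Mat p) (M : Fin K → Mat p) :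
    frob W (∑ k, M k) = ∑ k, frob W (M k) := by
  unfold frob
  have h : ∀ i j, W i j * (∑ k, M k) i j = ∑ k, W i j * M k i j := by
    intro i j; rw [Matrix.sum_apply, Finset.mul_sum]
  simp_rw [h]
  calc ∑ i, ∑ j, ∑ k, W i j * M k i j
      = ∑ i, ∑ k, ∑ j, W i j * M k i j :=
        Finset.sum_congr rfl fun i _ => Finset.sum_comm
    _ = ∑ k, ∑ i, ∑ j, W i j * M k i j := Finset.sum_comm

lemma frob_vecMulVec_left (a b : Vec p) (M : Mat p) :
    frob (Matrix.vecMulVec a b) M = ∑ i, ∑ j, a i * b j * M i j := by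
  unfold frob
  refine Finset.sum_congr rfl fun i _ => Finset.sum_congr rfl fun j _ => ?_
  rw [Matrix.vecMulVec_apply]

lemma frob_vecMulVec_vecMulVec (a b u v : Vec p) :
    frob (Matrix.vecMulVec a b) (Matrix.vecMulVec u v) = dotp a u * dotp b v := by
  rw [frob_vecMulVec_left]
  unfold dotp
  rw [Finset.sum_mul]
  refine Finset.sum_congr rfl fun i _ => ?_
  rw [Finset.mul_sum]
  refine Finset.sum_congr rfl fun j _ => ?_
  rw [Matrix.vecMulVec_apply]; ring

lemma vecMulVec_neg_left (a b : Vec p) :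
    Matrix.vecMulVec (-a) b = - Matrix.vecMulVec a b := by
  ext i j
  simp [Matrix.vecMulVec_apply]

lemma frob_neg_right (W M : Mat p) : frob W (-M) = - frob W M := by
  unfold frob
  rw [← Finset.sum_neg_distrib]
  refine Finset.sum_congr rfl fun i _ => ?_
  rw [← Finset.sum_neg_distrib]
  refine Finset.sum_congr rfl fun j _ => ?_
  simp

lemma theta_neg_left (s : ℝ) (u v : Vec p) : theta s (-u) v = theta s u v := by
  unfold theta
  rw [l2_neg, l1_neg]

end Frob

section MixedNormAPI

variable {p : ℕ}

/-- decomposition-value set -/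
def DSet (s : ℝ) (B : Mat p) : Set ℝ :=
  { t | ∃ (K : ℕ) (u v : Fin K → Vec p),
    B = ∑ k, Matrix.vecMulVec (u k) (v k) ∧ t = ∑ k, theta s (u k) (v k) }

lemma mixedNorm_eq_sInf (s : ℝ) (B : Mat p) : mixedNorm s B = sInf (DSet s B) := rfl

lemma DSet_nonempty (s : ℝ) (B : Mat p) : (DSet s B).Nonempty := by
  refine ⟨∑ k, theta s (fun i => if i = k then (1:ℝ) else 0) (B k), p,
    (fun k i => if i = k then (1:ℝ) else 0), (fun k => B k), ?_, rfl⟩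
  ext i j
  rw [Matrix.sum_apply]
  simp [Matrix.vecMulVec_apply]

lemma DSet_nonneg (s : ℝ) (B : Mat p) : ∀ t ∈ DSet s B, 0 ≤ t := by
  rintro t ⟨K, u, v, _, rfl⟩
  exact Finset.sum_nonneg fun k _ => theta_nonneg s _ _

lemma DSet_bddBelow (s : ℝ) (B : Mat p) : BddBelow (DSet s B) :=
  ⟨0, fun t ht => DSet_nonneg s B t ht⟩

lemma mixedNorm_nonneg (s : ℝ) (B : Mat p) : 0 ≤ mixedNorm s B :=
  le_csInf (DSet_nonempty s B) (DSet_nonneg s B)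

lemma mixedNorm_le_theta (s : ℝ) (u v : Vec p) :
    mixedNorm s (Matrix.vecMulVec u v) ≤ theta s u v := by
  refine csInf_le (DSet_bddBelow s _) ?_
  refine ⟨1, fun _ => u, fun _ => v, ?_, ?_⟩ <;> simp

lemma mixedNorm_zero (s : ℝ) : mixedNorm s (0 : Mat p) = 0 := by
  refine le_antisymm ?_ (mixedNorm_nonneg s 0)
  refine csInf_le (DSet_bddBelow s _) ?_
  exact ⟨0, Fin.elim0, Fin.elim0, by simp, by simp⟩

lemma frob_le_mixedNorm (s : ℝ) (Z : Mat p)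
    (h : ∀ u v : Vec p, frob Z (Matrix.vecMulVec u v) ≤ theta s u v) (C : Mat p) :
    frob Z C ≤ mixedNorm s C := by
  refine le_csInf (DSet_nonempty s C) ?_
  rintro t ⟨K, u, v, rfl, rfl⟩
  rw [frob_sum_right]
  exact Finset.sum_le_sum fun k _ => h (u k) (v k)

lemma abs_frob_le_theta {s : ℝ} {Z : Mat p}
    (h : ∀ u v : Vec p, frob Z (Matrix.vecMulVec u v) ≤ theta s u v) (u v : Vec p) :
    |frob Z (Matrix.vecMulVec u v)| ≤ theta s u v := by
  rcases abs_cases (frob Z (Matrix.vecMulVec u v)) with ⟨h1, _⟩ | ⟨h1, _⟩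
  · rw [h1]; exact h u v
  · rw [h1]
    have h2 := h (-u) v
    rw [vecMulVec_neg_left, frob_neg_right, theta_neg_left] at h2
    linarith

lemma DSet_add {s : ℝ} {C D : Mat p} {t₁ t₂ : ℝ} (h1 : t₁ ∈ DSet s C) (h2 : t₂ ∈ DSet s D) :
    t₁ + t₂ ∈ DSet s (C + D) := by
  obtain ⟨K₁, u₁, v₁, hC, ht₁⟩ := h1
  obtain ⟨K₂, u₂, v₂, hD, ht₂⟩ := h2
  refine ⟨K₁ + K₂, Fin.append u₁ u₂, Fin.append v₁ v₂, ?_, ?_⟩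
  · rw [hC, hD,
      Fin.sum_univ_add (f := fun k => Matrix.vecMulVec (Fin.append u₁ u₂ k) (Fin.append v₁ v₂ k))]
    congr 1
    · exact Finset.sum_congr rfl fun k _ => by rw [Fin.append_left, Fin.append_left]
    · exact Finset.sum_congr rfl fun k _ => by rw [Fin.append_right, Fin.append_right]
  · rw [ht₁, ht₂,
      Fin.sum_univ_add (f := fun k => theta s (Fin.append u₁ u₂ k) (Fin.append v₁ v₂ k))]
    congr 1
    · exact Finset.sum_congr rfl fun k _ => by rw [Fin.append_left, Fin.append_left]
    · exact Finset.sum_congr rfl fun k _ => by rw [Fin.append_right, Fin.append_right]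

lemma mixedNorm_add_le (s : ℝ) (C D : Mat p) :
    mixedNorm s (C + D) ≤ mixedNorm s C + mixedNorm s D := by
  have h : ∀ t₁ ∈ DSet s C, ∀ t₂ ∈ DSet s D, mixedNorm s (C + D) ≤ t₁ + t₂ :=
    fun t₁ h1 t₂ h2 => csInf_le (DSet_bddBelow s _) (DSet_add h1 h2)
  have h2 : ∀ t₁ ∈ DSet s C, mixedNorm s (C + D) - t₁ ≤ mixedNorm s D := by
    intro t₁ h1
    refine le_csInf (DSet_nonempty s D) fun t₂ ht₂ => ?_
    linarith [h t₁ h1 t₂ ht₂]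
  have h3 : mixedNorm s (C + D) - mixedNorm s D ≤ mixedNorm s C := by
    refine le_csInf (DSet_nonempty s C) fun t₁ h1 => ?_
    linarith [h2 t₁ h1]
  linarith

lemma DSet_smul {s : ℝ} {C : Mat p} {t : ℝ} (c : ℝ) (hc : 0 < c) (h : t ∈ DSet s C) :
    c * t ∈ DSet s (c • C) := by
  obtain ⟨K, u, v, hC, ht⟩ := h
  refine ⟨K, fun k => c • u k, v, ?_, ?_⟩
  · rw [hC, Finset.smul_sum]
    refine Finset.sum_congr rfl fun k _ => ?_
    ext i j
    simp [Matrix.vecMulVec_apply, Pi.smul_apply, smul_eq_mul, Matrix.smul_apply]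
    ring
  · rw [ht, Finset.mul_sum]
    refine Finset.sum_congr rfl fun k _ => ?_
    unfold theta
    rw [l2_smul, l1_smul, abs_of_pos hc]
    ring

lemma mixedNorm_smul (s : ℝ) (C : Mat p) (c : ℝ) (hc : 0 < c) :
    mixedNorm s (c • C) = c * mixedNorm s C := by
  have key : ∀ (c : ℝ), 0 < c → ∀ C : Mat p, mixedNorm s (c • C) ≤ c * mixedNorm s C := by
    intro c hc C
    have h1 : c⁻¹ * mixedNorm s (c • C) ≤ mixedNorm s C := by
      refine le_csInf (DSet_nonempty s C) fun t ht => ?_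
      rw [inv_mul_le_iff₀ hc]
      exact csInf_le (DSet_bddBelow s _) (DSet_smul c hc ht)
    calc mixedNorm s (c • C) = c * (c⁻¹ * mixedNorm s (c • C)) := by
          field_simp
    _ ≤ c * mixedNorm s C := mul_le_mul_of_nonneg_left h1 hc.le
  refine le_antisymm (key c hc C) ?_
  have h2 := key c⁻¹ (inv_pos.mpr hc) (c • C)
  rw [smul_smul, inv_mul_cancel₀ hc.ne', one_smul] at h2
  calc c * mixedNorm s C ≤ c * (c⁻¹ * mixedNorm s (c • C)) := mul_le_mul_of_nonneg_left h2 hc.le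
  _ = mixedNorm s (c • C) := by field_simp

lemma exists_dual (s : ℝ) (A : Mat p) :
    ∃ Z : Mat p, (∀ u v : Vec p, frob Z (Matrix.vecMulVec u v) ≤ theta s u v) ∧
      frob Z A = mixedNorm s A := by
  rcases eq_or_ne A 0 with rfl | hA
  · refine ⟨0, fun u v => ?_, ?_⟩
    · have h0 : frob (0 : Mat p) (Matrix.vecMulVec u v) = 0 := by simp [frob]
      rw [h0]; exact theta_nonneg s u v
    · have h0 : frob (0 : Mat p) (0 : Mat p) = 0 := by simp [frob]
      rw [h0, mixedNorm_zero]
  · have hdom : ∀ x : (LinearPMap.mkSpanSingleton (K := ℝ) (σ := RingHom.id ℝ) A (mixedNorm s A) hA).domain,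
        (LinearPMap.mkSpanSingleton (K := ℝ) (σ := RingHom.id ℝ) A (mixedNorm s A) hA) x ≤ mixedNorm s (x : Mat p) := by
      intro x
      rcases Submodule.mem_span_singleton.mp x.2 with ⟨c, hc⟩
      have hmem : c • A ∈ Submodule.span ℝ {A} :=
        Submodule.smul_mem _ c (Submodule.mem_span_singleton_self A)
      have hx : x = ⟨c • A, hmem⟩ := Subtype.ext hc.symm
      have hap : (LinearPMap.mkSpanSingleton (K := ℝ) (σ := RingHom.id ℝ) A (mixedNorm s A) hA)
          ⟨c • A, hmem⟩ = c • mixedNorm s A := LinearPMap.mkSpanSingleton'_apply _ _ _ c hmem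
      rw [hx, hap]
      rcases lt_trichotomy c 0 with h | h | h
      · have h1 : c • mixedNorm s A ≤ 0 := by
          rw [smul_eq_mul]
          exact mul_nonpos_of_nonpos_of_nonneg h.le (mixedNorm_nonneg s A)
        exact le_trans h1 (mixedNorm_nonneg s _)
      · subst h
        rw [zero_smul]
        exact mixedNorm_nonneg s _
      · rw [mixedNorm_smul s A c h, smul_eq_mul]
    obtain ⟨g, hg1, hg2⟩ := exists_extension_of_le_sublinear
      (LinearPMap.mkSpanSingleton A (mixedNorm s A) hA) (mixedNorm s)
      (fun c hc x => mixedNorm_smul s x c hc)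
      (fun x y => mixedNorm_add_le s x y) hdom
    have hfrob : ∀ M : Mat p, frob (fun i j => g (Matrix.single i j 1) : Mat p) M = g M := by
      intro M
      conv_rhs => rw [Matrix.matrix_eq_sum_single M]
      rw [map_sum]
      unfold frob
      refine Finset.sum_congr rfl fun i _ => ?_
      rw [map_sum]
      refine Finset.sum_congr rfl fun j _ => ?_
      have hsb : Matrix.single i j (M i j) = (M i j) • Matrix.single i j 1 := by
        ext a b
        by_cases h : i = a ∧ j = b <;> simp [Matrix.single, h, Matrix.smul_apply]
      rw [hsb, _root_.map_smul, smul_eq_mul, mul_comm]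
    refine ⟨fun i j => g (Matrix.single i j 1), fun u v => ?_, ?_⟩
    · rw [hfrob]
      exact le_trans (hg2 _) (mixedNorm_le_theta s u v)
    · rw [hfrob]
      have hmem : A ∈ Submodule.span ℝ {A} := Submodule.mem_span_singleton_self A
      have := hg1 ⟨A, hmem⟩
      rw [this, LinearPMap.mkSpanSingleton_apply ℝ ℝ hA (mixedNorm s A)]

end MixedNormAPI

section ScalarCore

lemma sq_le_imp_le {a b : ℝ} (ha : 0 ≤ a) (hb : 0 ≤ b) (h : a^2 ≤ b^2) : a ≤ b := by
  nlinarith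

lemma helper_mixed (A B d e φ φ' r : ℝ) (hA : 0 ≤ A) (hB : 0 ≤ B) (hd0 : 0 ≤ d) (he0 : 0 ≤ e)
    (hp0 : 0 ≤ φ) (hp'0 : 0 ≤ φ') (hr0 : 0 ≤ r) (hr : r^2 = 2*A*d)
    (h3d : 3*d ≤ A) (h3e : B ≤ 3*e)
    (hps : φ ≤ 2*r + d) (hp'2 : φ' ≤ 2*B) :
    (1/10)*(φ*φ') + d*e ≤ (4/5)*(A*e + d*B) := by
  have hr23 : r ≤ (2/3)*(A+d) := by
    refine sq_le_imp_le hr0 (by linarith) ?_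
    nlinarith [mul_nonneg (show (0:ℝ) ≤ 2*A - d by linarith) (show (0:ℝ) ≤ A - 2*d by linarith)]
  have hprod : φ*φ' ≤ (2*r + d)*(2*B) :=
    mul_le_mul hps hp'2 hp'0 (by linarith)
  have hsign : 0 ≤ ((4/5)*A - d)*(e - B/3) :=
    mul_nonneg (by linarith) (by linarith)
  nlinarith [mul_le_mul_of_nonneg_left hr23 hB]

lemma helper_small (A B d e φ φ' r r' : ℝ) (hA : 0 ≤ A) (hB : 0 ≤ B) (hd0 : 0 ≤ d) (he0 : 0 ≤ e)
    (hp0 : 0 ≤ φ) (hp'0 : 0 ≤ φ') (hr0 : 0 ≤ r) (hr'0 : 0 ≤ r')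
    (hr : r^2 = 2*A*d) (hr' : r'^2 = 2*B*e)
    (h3d : 3*d ≤ A) (h3e : 3*e ≤ B)
    (hps : φ ≤ 2*r + d) (hp's : φ' ≤ 2*r' + e) :
    (1/10)*(φ*φ') + d*e ≤ (4/5)*(A*e + d*B) := by
  have hS0 : 0 ≤ A*e + d*B := by positivity
  have h1 : r*r' ≤ A*e + d*B := by
    refine sq_le_imp_le (by positivity) hS0 ?_
    have : (r*r')^2 = 4*(A*e)*(d*B) := by rw [mul_pow, hr, hr']; ring
    nlinarith [sq_nonneg (A*e - d*B)]
  have h2 : r*e ≤ (5/12)*(A*e + d*B) := by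
    refine sq_le_imp_le (by positivity) (by linarith) ?_
    have he2 : (r*e)^2 = 2*A*d*e^2 := by rw [mul_pow, hr]
    have heB : e^2 ≤ e*B/3 := by nlinarith
    nlinarith [sq_nonneg (A*e - d*B), mul_nonneg (mul_nonneg hA hd0) he0]
  have h3 : r'*d ≤ (5/12)*(A*e + d*B) := by
    refine sq_le_imp_le (by positivity) (by linarith) ?_
    have he2 : (r'*d)^2 = 2*B*e*d^2 := by rw [mul_pow, hr']
    have hdA : d^2 ≤ d*A/3 := by nlinarith
    nlinarith [sq_nonneg (A*e - d*B), mul_nonneg (mul_nonneg hB he0) hd0]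
  have h4 : d*e ≤ (1/6)*(A*e + d*B) := by
    have hde1 : d*e ≤ (A/3)*e := mul_le_mul_of_nonneg_right (by linarith) he0
    have hde2 : d*e ≤ d*(B/3) := mul_le_mul_of_nonneg_left (by linarith) hd0
    linarith
  have hprod : φ*φ' ≤ (2*r + d)*(2*r' + e) :=
    mul_le_mul hps hp's hp'0 (by linarith)
  nlinarith

lemma helper_big (A B d e φ φ' : ℝ) (hA : 0 ≤ A) (hB : 0 ≤ B) (hd0 : 0 ≤ d) (he0 : 0 ≤ e)
    (hp0 : 0 ≤ φ) (hp'0 : 0 ≤ φ')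
    (hdA : d ≤ A) (heB : e ≤ B) (h3d : A ≤ 3*d) (h3e : B ≤ 3*e)
    (hp2 : φ ≤ 2*A) (hp'2 : φ' ≤ 2*B) :
    (1/10)*(φ*φ') + d*e ≤ (4/5)*(A*e + d*B) := by
  have hprod : φ*φ' ≤ 4*(A*B) := by nlinarith
  nlinarith [mul_nonneg (show (0:ℝ) ≤ 3*A - 3*d by linarith) (show (0:ℝ) ≤ 3*e - B by linarith),
    mul_nonneg (show (0:ℝ) ≤ 3*d - A by linarith) (show (0:ℝ) ≤ 3*B - 3*e by linarith),
    mul_nonneg hA hB]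

lemma scalar_core (A B x y d e φ φ' : ℝ)
    (hx : 0 ≤ x) (hy : 0 ≤ y)
    (hd : d = A - x) (he : e = B - y) (hd0 : 0 ≤ d) (he0 : 0 ≤ e)
    (hp0 : 0 ≤ φ) (hp'0 : 0 ≤ φ')
    (hp2 : φ ≤ 2*A) (hp'2 : φ' ≤ 2*B)
    (hps : φ ≤ 2*Real.sqrt (2*A*d) + d) (hp's : φ' ≤ 2*Real.sqrt (2*B*e) + e) :
    x*y + (1/10)*(φ*φ') + (1/5)*(A*e) + (1/5)*(d*B) ≤ A*B := by
  have hA : 0 ≤ A := by linarith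
  have hB : 0 ≤ B := by linarith
  have hdA : d ≤ A := by linarith
  have heB : e ≤ B := by linarith
  set r := Real.sqrt (2*A*d) with hrdef
  set r' := Real.sqrt (2*B*e) with hr'def
  have hr0 : 0 ≤ r := Real.sqrt_nonneg _
  have hr'0 : 0 ≤ r' := Real.sqrt_nonneg _
  have hr : r^2 = 2*A*d := Real.sq_sqrt (by positivity)
  have hr' : r'^2 = 2*B*e := Real.sq_sqrt (by positivity)
  have key : (1/10)*(φ*φ') + d*e ≤ (4/5)*(A*e + d*B) := by
    rcases le_or_gt (3*d) A with h3d | h3d <;> rcases le_or_gt (3*e) B with h3e | h3e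
    · exact helper_small A B d e φ φ' r r' hA hB hd0 he0 hp0 hp'0 hr0 hr'0 hr hr' h3d h3e hps hp's
    · exact helper_mixed A B d e φ φ' r hA hB hd0 he0 hp0 hp'0 hr0 hr h3d h3e.le hps hp'2
    · have := helper_mixed B A e d φ' φ r' hB hA he0 hd0 hp'0 hp0 hr'0 hr' h3e h3d.le hp's hp2
      linarith [this]
    · exact helper_big A B d e φ φ' hA hB hd0 he0 hp0 hp'0 hdA heB h3d.le h3e.le hp2 hp'2
  have hxy : x*y = A*B - A*e - d*B + d*e := by
    have hx' : x = A - d := by linarith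
    have hy' : y = B - e := by linarith
    rw [hx', hy']; ring
  linarith

end ScalarCore

section MoreAux

variable {p : ℕ}

lemma frob_add_right (W C B : Mat p) : frob W (C + B) = frob W C + frob W B := by
  unfold frob
  rw [← Finset.sum_add_distrib]
  refine Finset.sum_congr rfl fun i _ => ?_
  rw [← Finset.sum_add_distrib]
  refine Finset.sum_congr rfl fun j _ => ?_
  simp [Matrix.add_apply]; ring

lemma frob_smul_right (c : ℝ) (W M : Mat p) : frob W (c • M) = c * frob W M := by
  unfold frob
  rw [Finset.mul_sum]
  refine Finset.sum_congr rfl fun i _ => ?_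
  rw [Finset.mul_sum]
  refine Finset.sum_congr rfl fun j _ => ?_
  simp [Matrix.smul_apply]; ring

lemma frob_vmv_left_row (a b : Vec p) (M : Mat p) :
    frob (Matrix.vecMulVec a b) M = ∑ i, a i * (∑ j, M i j * b j) := by
  unfold frob
  refine Finset.sum_congr rfl fun i _ => ?_
  rw [Finset.mul_sum]
  refine Finset.sum_congr rfl fun j _ => ?_
  rw [Matrix.vecMulVec_apply]; ring

lemma frob_vmv_left_col (a b : Vec p) (M : Mat p) :
    frob (Matrix.vecMulVec a b) M = ∑ j, b j * (∑ i, M i j * a i) := by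
  unfold frob
  rw [Finset.sum_comm]
  refine Finset.sum_congr rfl fun j _ => ?_
  rw [Finset.mul_sum]
  refine Finset.sum_congr rfl fun i _ => ?_
  rw [Matrix.vecMulVec_apply]; ring

lemma frob_vmv_right_row (Z : Mat p) (a b : Vec p) :
    frob Z (Matrix.vecMulVec a b) = ∑ i, a i * (∑ j, Z i j * b j) := by
  unfold frob
  refine Finset.sum_congr rfl fun i _ => ?_
  rw [Finset.mul_sum]
  refine Finset.sum_congr rfl fun j _ => ?_
  rw [Matrix.vecMulVec_apply]; ring

lemma frob_vmv_right_col (Z : Mat p) (a b : Vec p) :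
    frob Z (Matrix.vecMulVec a b) = ∑ j, b j * (∑ i, Z i j * a i) := by
  unfold frob
  rw [Finset.sum_comm]
  refine Finset.sum_congr rfl fun j _ => ?_
  rw [Finset.mul_sum]
  refine Finset.sum_congr rfl fun i _ => ?_
  rw [Matrix.vecMulVec_apply]; ring

lemma vecMulVec_sub_right (a c d : Vec p) :
    Matrix.vecMulVec a (c - d) = Matrix.vecMulVec a c - Matrix.vecMulVec a d := by
  ext i j
  simp [Matrix.vecMulVec_apply, Matrix.sub_apply]
  ring

lemma vecMulVec_sub_left (a c d : Vec p) :
    Matrix.vecMulVec (c - d) a = Matrix.vecMulVec c a - Matrix.vecMulVec d a := by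
  ext i j
  simp [Matrix.vecMulVec_apply, Matrix.sub_apply]
  ring

lemma vecMulVec_smul_right (t : ℝ) (a c : Vec p) :
    Matrix.vecMulVec a (t • c) = t • Matrix.vecMulVec a c := by
  ext i j
  simp [Matrix.vecMulVec_apply, Matrix.smul_apply]
  ring

lemma vecMulVec_smul_left (t : ℝ) (a c : Vec p) :
    Matrix.vecMulVec (t • c) a = t • Matrix.vecMulVec c a := by
  ext i j
  simp [Matrix.vecMulVec_apply, Matrix.smul_apply]
  ring

lemma l2_matvec_le (A : Mat p) (c : Vec p) :
    l2 (fun i => ∑ j, A i j * c j) ≤ frobNorm A * l2 c := by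
  have h : ∑ i, (∑ j, A i j * c j) ^ 2 ≤ (∑ i, ∑ j, A i j ^ 2) * ∑ j, c j ^ 2 := by
    rw [Finset.sum_mul]
    refine Finset.sum_le_sum fun i _ => ?_
    exact Finset.sum_mul_sq_le_sq_mul_sq Finset.univ (fun j => A i j) c
  have hfrob : frob A A = ∑ i, ∑ j, A i j ^ 2 := by
    unfold frob
    exact Finset.sum_congr rfl fun i _ => Finset.sum_congr rfl fun j _ => (sq (A i j)).symm ▸ by ring
  calc l2 (fun i => ∑ j, A i j * c j) = Real.sqrt (∑ i, (∑ j, A i j * c j) ^ 2) := rfl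
  _ ≤ Real.sqrt ((∑ i, ∑ j, A i j ^ 2) * ∑ j, c j ^ 2) := Real.sqrt_le_sqrt h
  _ = Real.sqrt (∑ i, ∑ j, A i j ^ 2) * Real.sqrt (∑ j, c j ^ 2) :=
      Real.sqrt_mul (by positivity) _
  _ = frobNorm A * l2 c := by rw [frobNorm, hfrob]; rfl

lemma l2_vecmat_le (A : Mat p) (c : Vec p) :
    l2 (fun j => ∑ i, A i j * c i) ≤ frobNorm A * l2 c := by
  have h : ∑ j, (∑ i, A i j * c i) ^ 2 ≤ (∑ i, ∑ j, A i j ^ 2) * ∑ i, c i ^ 2 := by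
    rw [Finset.sum_comm (f := fun i j => A i j ^ 2), Finset.sum_mul]
    refine Finset.sum_le_sum fun j _ => ?_
    exact Finset.sum_mul_sq_le_sq_mul_sq Finset.univ (fun i => A i j) c
  have hfrob : frob A A = ∑ i, ∑ j, A i j ^ 2 := by
    unfold frob
    exact Finset.sum_congr rfl fun i _ => Finset.sum_congr rfl fun j _ => (sq (A i j)).symm ▸ by ring
  calc l2 (fun j => ∑ i, A i j * c i) = Real.sqrt (∑ j, (∑ i, A i j * c i) ^ 2) := rfl
  _ ≤ Real.sqrt ((∑ i, ∑ j, A i j ^ 2) * ∑ i, c i ^ 2) := Real.sqrt_le_sqrt h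
  _ = Real.sqrt (∑ i, ∑ j, A i j ^ 2) * Real.sqrt (∑ i, c i ^ 2) :=
      Real.sqrt_mul (by positivity) _
  _ = frobNorm A * l2 c := by rw [frobNorm, hfrob]; rfl

lemma sign_mul_self' (x : ℝ) : Real.sign x * x = |x| := by
  rcases lt_trichotomy x 0 with h | h | h
  · rw [Real.sign_of_neg h, abs_of_neg h]; ring
  · simp [h]
  · rw [Real.sign_of_pos h, abs_of_pos h]; ring

lemma abs_sign_le_one (x : ℝ) : |Real.sign x| ≤ 1 := by
  rcases lt_trichotomy x 0 with h | h | h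
  · rw [Real.sign_of_neg h]; norm_num
  · simp [h]
  · rw [Real.sign_of_pos h]; norm_num

lemma dotp_comm (u v : Vec p) : dotp u v = dotp v u := by
  unfold dotp
  exact Finset.sum_congr rfl fun i _ => mul_comm _ _

lemma dotp_sub_right (a c d : Vec p) : dotp a (c - d) = dotp a c - dotp a d := by
  unfold dotp
  rw [← Finset.sum_sub_distrib]
  refine Finset.sum_congr rfl fun i _ => ?_
  simp [Pi.sub_apply]; ring

lemma dotp_smul_right (t : ℝ) (a c : Vec p) : dotp a (t • c) = t * dotp a c := by
  unfold dotp
  rw [Finset.mul_sum]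
  refine Finset.sum_congr rfl fun i _ => ?_
  simp [Pi.smul_apply, smul_eq_mul]; ring

end MoreAux

set_option maxHeartbeats 2000000 in
/-- Lemma 3.1 (subgradients of the mixed atomic norm). -/
theorem subgradient_lower_bound {p s : ℕ} (hs : 0 < s) (β : Vec p) (hβ : IsSparse s β)
    (A : Mat p) :
    ∃ W : Mat p, InSubdiff (s : ℝ) W (Matrix.vecMulVec β β) ∧
      (1 / 10) * mixedNorm (s : ℝ) A - 5 * frobNorm A ≤ frob W A := by
  obtain ⟨Z, hZ1, hZ2⟩ := exists_dual (s : ℝ) A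
  have habsZ : ∀ u v : Vec p, |frob Z (Matrix.vecMulVec u v)| ≤ theta (s:ℝ) u v :=
    abs_frob_le_theta hZ1
  have hF0 : 0 ≤ frobNorm A := Real.sqrt_nonneg _
  by_cases hb0 : β = 0
  · subst hb0
    refine ⟨(1/10 : ℝ) • Z, ?_, ?_⟩
    · intro C
      have hB0 : Matrix.vecMulVec (0 : Vec p) (0 : Vec p) = (0 : Mat p) := by
        ext i j; simp [Matrix.vecMulVec_apply]
      rw [hB0, mixedNorm_zero, sub_zero, frob_smul_left]
      have h1 := frob_le_mixedNorm _ Z hZ1 C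
      have h2 := mixedNorm_nonneg (s:ℝ) C
      linarith
    · rw [frob_smul_left, hZ2]
      linarith
  set sv : ℝ := Real.sqrt (s:ℝ) with hsvdef
  have hsv : 0 < sv := Real.sqrt_pos.mpr (by exact_mod_cast hs)
  set si : ℝ := sv⁻¹ with hsidef
  have hsi : 0 < si := inv_pos.mpr hsv
  have hsisv : si * sv = 1 := inv_mul_cancel₀ hsv.ne'
  have hnb : 0 < l2 β := by
    obtain ⟨i, hi⟩ := Function.ne_iff.mp hb0
    have hpos : 0 < ∑ i, β i ^ 2 :=
      Finset.sum_pos' (fun j _ => sq_nonneg _) ⟨i, Finset.mem_univ i, pow_two_pos_of_ne_zero hi⟩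
    unfold l2
    exact Real.sqrt_pos.mpr hpos
  set bh : Vec p := (l2 β)⁻¹ • β with hbhdef
  set σv : Vec p := fun i => Real.sign (β i) with hσdef
  set w : Vec p := bh + si • σv with hwdef
  set offS : Finset (Fin p) := Finset.univ.filter (fun i => β i = 0) with hoffSdef
  set S : Finset (Fin p) := Finset.univ.filter (fun i => ¬ β i = 0) with hSdef
  have hsqcard : Real.sqrt (S.card) ≤ sv := by
    have hcard : S.card ≤ s := by
      have h1 : {i | β i ≠ 0}.ncard = S.card := by
        rw [← Set.ncard_coe_finset]
        congr 1
        ext i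
        simp [hSdef]
      exact h1 ▸ hβ
    rw [hsvdef]
    exact Real.sqrt_le_sqrt (by exact_mod_cast hcard)
  have hl2bh : l2 bh = 1 := by
    rw [hbhdef, l2_smul, abs_of_pos (inv_pos.mpr hnb)]
    field_simp
  have hbhsupp : ∀ i, β i = 0 → bh i = 0 := by
    intro i h
    rw [hbhdef]
    simp [Pi.smul_apply, h]
  have hl1S : ∀ g : Vec p, ∑ j ∈ S, |g j| ≤ sv * l2 g := by
    intro g
    exact (sum_filter_abs_le_l2 S g).trans
      (mul_le_mul_of_nonneg_right hsqcard (l2_nonneg g))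
  have hl1split : ∀ g : Vec p, l1 g = (∑ j ∈ S, |g j|) + ∑ j ∈ offS, |g j| := by
    intro g
    have h := Finset.sum_filter_add_sum_filter_not Finset.univ (fun i => β i = 0)
      (fun j => |g j|)
    unfold l1
    rw [← h, hSdef, hoffSdef]
    ring
  have hl2w : l2 w ≤ 2 := by
    have hσ2 : ∑ i, σv i ^ 2 = (S.card : ℝ) := by
      rw [hSdef, Finset.card_filter]
      push_cast
      simp only [hσdef]
      refine Finset.sum_congr rfl fun i _ => ?_
      rcases lt_trichotomy (β i) 0 with h | h | h
      · rw [Real.sign_of_neg h]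
        simp [h.ne]
      · simp [h]
      · rw [Real.sign_of_pos h]
        simp [h.ne']
    have hl2σ : l2 σv ≤ sv := by
      unfold l2
      rw [hσ2]
      exact hsqcard
    have h1 : l2 w ≤ l2 bh + l2 (si • σv) := hwdef ▸ l2_add_le bh (si • σv)
    rw [l2_smul si σv, abs_of_pos hsi] at h1
    have h2 : si * l2 σv ≤ si * sv := mul_le_mul_of_nonneg_left hl2σ hsi.le
    rw [hsisv] at h2
    linarith [h1, hl2bh]
  set al : Vec p → ℝ := fun u => l2 u + si * l1 u with haldef
  have hal0 : ∀ u, 0 ≤ al u :=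
    fun u => add_nonneg (l2_nonneg u) (mul_nonneg hsi.le (l1_nonneg u))
  have htheta : ∀ u v : Vec p, theta (s:ℝ) u v = al u * al v := fun u v => rfl
  have hallb : ∀ u, l2 u ≤ al u :=
    fun u => le_add_of_nonneg_right (mul_nonneg hsi.le (l1_nonneg u))
  have hdotw : ∀ u : Vec p, dotp w u = dotp bh u + si * dotp σv u := by
    intro u
    rw [hwdef]
    unfold dotp
    rw [Finset.mul_sum, ← Finset.sum_add_distrib]
    refine Finset.sum_congr rfl fun i _ => ?_
    simp [Pi.add_apply, Pi.smul_apply, smul_eq_mul]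
    ring
  have hbhu : ∀ u : Vec p, |dotp bh u| ≤ l2 u := by
    intro u
    have := abs_dotp_le_l2 bh u
    rw [hl2bh, one_mul] at this
    exact this
  have hσu : ∀ u : Vec p, |dotp σv u| ≤ ∑ j ∈ S, |u j| := by
    intro u
    unfold dotp
    calc |∑ i, σv i * u i| ≤ ∑ i, |σv i * u i| := Finset.abs_sum_le_sum_abs _ _
    _ ≤ ∑ i, (if β i = 0 then 0 else |u i|) := by
        refine Finset.sum_le_sum fun i _ => ?_
        rw [abs_mul]
        by_cases h : β i = 0
        · simp [hσdef, h]
        · simp only [h, if_false]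
          exact mul_le_of_le_one_left (abs_nonneg _) (abs_sign_le_one _)
    _ = ∑ j ∈ S, |u j| := by
        rw [hSdef, Finset.sum_filter]
        refine Finset.sum_congr rfl fun i _ => ?_
        by_cases h : β i = 0 <;> simp [h]
  have hoffu : ∀ u : Vec p, (∑ j ∈ offS, |u j|) ≤ l1 u - |dotp σv u| := by
    intro u
    have h1 := hl1split u
    have h2 := hσu u
    linarith
  set R : Vec p → Vec p := fun u => u - dotp bh u • bh with hRdef
  have hbh2 : ∑ i, bh i ^ 2 = 1 := by
    have h := l2_sq bh
    rw [hl2bh] at h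
    simpa using h.symm
  have hRapp : ∀ u i, (R u) i = u i - dotp bh u * bh i := by
    intro u i
    simp [hRdef, Pi.sub_apply, Pi.smul_apply, smul_eq_mul]
  have hRl2sq : ∀ u, (l2 (R u))^2 = (l2 u)^2 - (dotp bh u)^2 := by
    intro u
    rw [l2_sq, l2_sq]
    have hexp : ∀ i, (R u) i ^ 2
        = u i ^ 2 - 2 * dotp bh u * (bh i * u i) + (dotp bh u)^2 * bh i ^ 2 := by
      intro i
      rw [hRapp u i]
      ring
    rw [Finset.sum_congr rfl fun i _ => hexp i]
    rw [Finset.sum_add_distrib, Finset.sum_sub_distrib, ← Finset.mul_sum, ← Finset.mul_sum]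
    have hdot : ∑ i, bh i * u i = dotp bh u := rfl
    rw [hdot, hbh2]
    ring
  have hRl2 : ∀ u, l2 (R u) ≤ l2 u := by
    intro u
    refine sq_le_imp_le (l2_nonneg _) (l2_nonneg u) ?_
    rw [hRl2sq u]
    nlinarith [sq_nonneg (dotp bh u)]
  have hRl1 : ∀ u, l1 (R u) ≤ sv * l2 (R u) + ∑ j ∈ offS, |u j| := by
    intro u
    have h1 := hl1split (R u)
    have h2 : ∑ j ∈ offS, |(R u) j| = ∑ j ∈ offS, |u j| := by
      refine Finset.sum_congr rfl fun j hj => ?_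
      have hβj : β j = 0 := by
        rw [hoffSdef] at hj
        simpa using (Finset.mem_filter.mp hj).2
      rw [hRapp u j, hbhsupp j hβj]
      ring_nf
    have h3 := hl1S (R u)
    linarith
  have hoffl1 : ∀ u : Vec p, ∑ j ∈ offS, |u j| ≤ l1 u := by
    intro u
    rw [hl1split u]
    have h : (0:ℝ) ≤ ∑ j ∈ S, |u j| := Finset.sum_nonneg fun j _ => abs_nonneg _
    linarith
  have halR : ∀ u, al (R u) ≤ 2 * l2 (R u) + si * ∑ j ∈ offS, |u j| := by
    intro u
    have h1 := hRl1 u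
    have h2 : si * l1 (R u) ≤ si * (sv * l2 (R u) + ∑ j ∈ offS, |u j|) :=
      mul_le_mul_of_nonneg_left h1 hsi.le
    have h3 : si * (sv * l2 (R u)) = l2 (R u) := by
      rw [← mul_assoc, hsisv, one_mul]
    have h4 : al (R u) = l2 (R u) + si * l1 (R u) := rfl
    rw [h4]
    rw [mul_add] at h2
    linarith
  have hRal2 : ∀ u, al (R u) ≤ 2 * al u := by
    intro u
    have h1 := halR u
    have h2 := hRl2 u
    have h3 : si * ∑ j ∈ offS, |u j| ≤ si * l1 u :=
      mul_le_mul_of_nonneg_left (hoffl1 u) hsi.le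
    have h4 : al u = l2 u + si * l1 u := rfl
    have h5 := hallb u
    linarith
  have habsw : ∀ u : Vec p, |dotp w u| ≤ |dotp bh u| + si * |dotp σv u| := by
    intro u
    rw [hdotw u]
    refine (abs_add_le _ _).trans ?_
    rw [abs_mul, abs_of_pos hsi]
  have hd0 : ∀ u, 0 ≤ al u - |dotp w u| := by
    intro u
    have h1 := habsw u
    have h2 := hbhu u
    have h3 := hσu u
    have h4 : ∑ j ∈ S, |u j| ≤ l1 u := by
      rw [hl1split u]
      have : (0:ℝ) ≤ ∑ j ∈ offS, |u j| := Finset.sum_nonneg fun j _ => abs_nonneg _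
      linarith
    have h5 : si * |dotp σv u| ≤ si * l1 u :=
      mul_le_mul_of_nonneg_left (h3.trans h4) hsi.le
    have h6 : al u = l2 u + si * l1 u := rfl
    linarith
  have hdsplit : ∀ u, (l2 u - |dotp bh u|) + si * (l1 u - |dotp σv u|) ≤ al u - |dotp w u| := by
    intro u
    have h1 := habsw u
    have h2 : si * (l1 u - |dotp σv u|) = si * l1 u - si * |dotp σv u| := by ring
    have h3 : al u = l2 u + si * l1 u := rfl
    linarith
  have hRalsq : ∀ u, al (R u) ≤
      2 * Real.sqrt (2 * al u * (al u - |dotp w u|)) + (al u - |dotp w u|) := by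
    intro u
    have hd1 : 0 ≤ l1 u - |dotp σv u| := by
      have h3 := hσu u
      have h4 : ∑ j ∈ S, |u j| ≤ l1 u := by
        rw [hl1split u]
        have : (0:ℝ) ≤ ∑ j ∈ offS, |u j| := Finset.sum_nonneg fun j _ => abs_nonneg _
        linarith
      linarith
    have hd2 : 0 ≤ l2 u - |dotp bh u| := by linarith [hbhu u]
    have hl2R : l2 (R u) ≤ Real.sqrt (2 * al u * (al u - |dotp w u|)) := by
      refine sq_le_imp_le (l2_nonneg _) (Real.sqrt_nonneg _) ?_
      rw [Real.sq_sqrt (by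
        have := hal0 u
        have := hd0 u
        positivity)]
      rw [hRl2sq u]
      have h1 : l2 u - |dotp bh u| ≤ al u - |dotp w u| := by
        have := hdsplit u
        nlinarith [mul_nonneg hsi.le hd1]
      have h2 : l2 u + |dotp bh u| ≤ 2 * al u := by
        have := hbhu u
        have := hallb u
        linarith
      nlinarith [sq_abs (dotp bh u), mul_le_mul h2 h1 hd2 (by linarith [hal0 u]),
        abs_nonneg (dotp bh u), l2_nonneg u]
    have h5 := halR u
    have h6 : si * ∑ j ∈ offS, |u j| ≤ si * (l1 u - |dotp σv u|) :=
      mul_le_mul_of_nonneg_left (hoffu u) hsi.le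
    have h7 : si * (l1 u - |dotp σv u|) ≤ al u - |dotp w u| := by
      have := hdsplit u
      linarith
    linarith
  set z1 : Vec p := fun j => ∑ i, Z i j * bh i with hz1def
  set z2 : Vec p := fun i => ∑ j, Z i j * bh j with hz2def
  set g0 : Vec p := fun j => ∑ i, A i j * bh i with hg0def
  set f0 : Vec p := fun i => ∑ j, A i j * bh j with hf0def
  set m : Vec p := fun j => if β j = 0 then Real.sign (g0 j) else 0 with hmdef
  set mp : Vec p := fun i => if β i = 0 then Real.sign (f0 i) else 0 with hmpdef
  have hmoff : ∀ (mm : Vec p), (∀ j, ¬ β j = 0 → mm j = 0) → (∀ j, |mm j| ≤ 1) →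
      ∀ u : Vec p, |dotp mm u| ≤ ∑ j ∈ offS, |u j| := by
    intro mm hsupp hbnd u
    unfold dotp
    calc |∑ i, mm i * u i| ≤ ∑ i, |mm i * u i| := Finset.abs_sum_le_sum_abs _ _
    _ ≤ ∑ i, (if β i = 0 then |u i| else 0) := by
        refine Finset.sum_le_sum fun i _ => ?_
        rw [abs_mul]
        by_cases h : β i = 0
        · simp only [h, if_true]
          exact mul_le_of_le_one_left (abs_nonneg _) (hbnd i)
        · rw [hsupp i h]
          simp [h]
    _ = ∑ j ∈ offS, |u j| := by
        rw [hoffSdef, Finset.sum_filter]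
  have hmu : ∀ u : Vec p, |dotp m u| ≤ ∑ j ∈ offS, |u j| := by
    refine hmoff m (fun j h => ?_) (fun j => ?_)
    · simp [hmdef, h]
    · by_cases h : β j = 0
      · simp only [hmdef, h, if_true]
        exact abs_sign_le_one _
      · simp [hmdef, h]
  have hmpu : ∀ u : Vec p, |dotp mp u| ≤ ∑ j ∈ offS, |u j| := by
    refine hmoff mp (fun j h => ?_) (fun j => ?_)
    · simp [hmpdef, h]
    · by_cases h : β j = 0
      · simp only [hmpdef, h, if_true]
        exact abs_sign_le_one _
      · simp [hmpdef, h]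
  set ρ : ℝ := frob Z (Matrix.vecMulVec bh bh) with hρdef
  set W : Mat p := Matrix.vecMulVec w w
    + (1/10 : ℝ) • (Z - Matrix.vecMulVec bh z1 - Matrix.vecMulVec z2 bh
        + ρ • Matrix.vecMulVec bh bh)
    + ((1/5) * si) • Matrix.vecMulVec bh m + ((1/5) * si) • Matrix.vecMulVec mp bh with hWdef
  have hWfrob : ∀ M : Mat p, frob W M
      = frob (Matrix.vecMulVec w w) M
        + (1/10) * (frob Z M - frob (Matrix.vecMulVec bh z1) M
            - frob (Matrix.vecMulVec z2 bh) M + ρ * frob (Matrix.vecMulVec bh bh) M)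
        + (1/5) * si * frob (Matrix.vecMulVec bh m) M
        + (1/5) * si * frob (Matrix.vecMulVec mp bh) M := by
    intro M
    rw [hWdef]
    rw [frob_add_left, frob_add_left, frob_add_left, frob_smul_left, frob_smul_left,
      frob_smul_left, frob_add_left, frob_sub_left, frob_sub_left, frob_smul_left]
  have hZbhc : ∀ c : Vec p, frob Z (Matrix.vecMulVec bh c) = dotp z1 c := by
    intro c
    rw [frob_vmv_right_col]
    unfold dotp
    refine Finset.sum_congr rfl fun j _ => ?_
    simp only [hz1def]
    ring
  have hZcbh : ∀ c : Vec p, frob Z (Matrix.vecMulVec c bh) = dotp z2 c := by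
    intro c
    rw [frob_vmv_right_row]
    unfold dotp
    refine Finset.sum_congr rfl fun i _ => ?_
    simp only [hz2def]
    ring
  have hRZR : ∀ u v : Vec p,
      frob Z (Matrix.vecMulVec u v) - dotp bh u * dotp z1 v - dotp z2 u * dotp bh v
        + ρ * (dotp bh u * dotp bh v)
      = frob Z (Matrix.vecMulVec (R u) (R v)) := by
    intro u v
    have hexp : Matrix.vecMulVec (R u) (R v)
        = Matrix.vecMulVec u v - dotp bh v • Matrix.vecMulVec u bh
          - dotp bh u • Matrix.vecMulVec bh v
          + (dotp bh u * dotp bh v) • Matrix.vecMulVec bh bh := by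
      ext i j
      simp only [hRdef, Matrix.vecMulVec_apply, Matrix.sub_apply, Matrix.add_apply,
        Matrix.smul_apply, Pi.sub_apply, Pi.smul_apply, smul_eq_mul]
      ring
    rw [hexp, frob_add_right, frob_sub_right, frob_sub_right, frob_smul_right,
      frob_smul_right, frob_smul_right, hZbhc v, hZcbh u, ← hρdef]
    ring
  have hsim : ∀ x : Vec p, si * |dotp m x| ≤ al x - |dotp w x| := by
    intro x
    have h1 : si * |dotp m x| ≤ si * (l1 x - |dotp σv x|) :=
      mul_le_mul_of_nonneg_left ((hmu x).trans (hoffu x)) hsi.le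
    have h2 := hdsplit x
    have h3 := hbhu x
    linarith
  have hsimp : ∀ x : Vec p, si * |dotp mp x| ≤ al x - |dotp w x| := by
    intro x
    have h1 : si * |dotp mp x| ≤ si * (l1 x - |dotp σv x|) :=
      mul_le_mul_of_nonneg_left ((hmpu x).trans (hoffu x)) hsi.le
    have h2 := hdsplit x
    have h3 := hbhu x
    linarith
  clear_value sv si bh σv w al R z1 z2 g0 f0 m mp ρ W offS S
  have hpair : ∀ u v : Vec p, frob W (Matrix.vecMulVec u v) ≤ theta (s:ℝ) u v := by
    intro u v
    rw [hWfrob, htheta]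
    rw [frob_vecMulVec_vecMulVec w w u v, frob_vecMulVec_vecMulVec bh z1 u v,
      frob_vecMulVec_vecMulVec z2 bh u v, frob_vecMulVec_vecMulVec bh bh u v,
      frob_vecMulVec_vecMulVec bh m u v, frob_vecMulVec_vecMulVec mp bh u v]
    have hgrp : frob Z (Matrix.vecMulVec u v) - dotp bh u * dotp z1 v
        - dotp z2 u * dotp bh v + ρ * (dotp bh u * dotp bh v)
        = frob Z (Matrix.vecMulVec (R u) (R v)) := hRZR u v
    have e1 : dotp w u * dotp w v ≤ |dotp w u| * |dotp w v| := by
      calc dotp w u * dotp w v ≤ |dotp w u * dotp w v| := le_abs_self _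
      _ = |dotp w u| * |dotp w v| := abs_mul _ _
    have e2 : frob Z (Matrix.vecMulVec (R u) (R v)) ≤ al (R u) * al (R v) := by
      have h := habsZ (R u) (R v)
      rw [htheta] at h
      exact (le_abs_self _).trans h
    have t3 : si * (dotp bh u * dotp m v) ≤ al u * (al v - |dotp w v|) := by
      have habs : si * (dotp bh u * dotp m v) ≤ si * (|dotp bh u| * |dotp m v|) := by
        refine mul_le_mul_of_nonneg_left ?_ hsi.le
        calc dotp bh u * dotp m v ≤ |dotp bh u * dotp m v| := le_abs_self _
        _ = |dotp bh u| * |dotp m v| := abs_mul _ _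
      have h5 : |dotp bh u| * (si * |dotp m v|) ≤ al u * (al v - |dotp w v|) :=
        mul_le_mul ((hbhu u).trans (hallb u)) (hsim v)
          (mul_nonneg hsi.le (abs_nonneg _)) (hal0 u)
      have h6 : si * (|dotp bh u| * |dotp m v|) = |dotp bh u| * (si * |dotp m v|) := by ring
      linarith
    have t4 : si * (dotp mp u * dotp bh v) ≤ (al u - |dotp w u|) * al v := by
      have habs : si * (dotp mp u * dotp bh v) ≤ si * (|dotp mp u| * |dotp bh v|) := by
        refine mul_le_mul_of_nonneg_left ?_ hsi.le
        calc dotp mp u * dotp bh v ≤ |dotp mp u * dotp bh v| := le_abs_self _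
        _ = |dotp mp u| * |dotp bh v| := abs_mul _ _
      have h5 : (si * |dotp mp u|) * |dotp bh v| ≤ (al u - |dotp w u|) * al v :=
        mul_le_mul (hsimp u) ((hbhu v).trans (hallb v)) (abs_nonneg _) (hd0 u)
      have h6 : si * (|dotp mp u| * |dotp bh v|) = (si * |dotp mp u|) * |dotp bh v| := by ring
      linarith
    have core := scalar_core (al u) (al v) |dotp w u| |dotp w v|
        (al u - |dotp w u|) (al v - |dotp w v|) (al (R u)) (al (R v))
        (abs_nonneg _) (abs_nonneg _) rfl rfl (hd0 u) (hd0 v) (hal0 (R u)) (hal0 (R v))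
        (hRal2 u) (hRal2 v) (hRalsq u) (hRalsq v)
    rw [hgrp]
    linarith [e1, e2, t3, t4, core]
  have hBval : frob W (Matrix.vecMulVec β β) = theta (s:ℝ) β β := by
    have hdotbhβ : dotp bh β = l2 β := by
      rw [hbhdef]
      unfold dotp
      have h1 : ∑ i, ((l2 β)⁻¹ • β) i * β i = (l2 β)⁻¹ * ∑ i, β i ^ 2 := by
        rw [Finset.mul_sum]
        refine Finset.sum_congr rfl fun i _ => ?_
        simp only [Pi.smul_apply, smul_eq_mul]
        ring
      rw [h1, ← l2_sq, sq]
      field_simp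
    have hdotσβ : dotp σv β = l1 β := by
      unfold dotp l1
      simp only [hσdef]
      exact Finset.sum_congr rfl fun i _ => sign_mul_self' (β i)
    have hdotwβ : dotp w β = al β := by
      rw [hdotw β, hdotbhβ, hdotσβ, haldef]
    have hRβ : R β = 0 := by
      simp only [hRdef]
      rw [hdotbhβ, hbhdef, smul_smul, mul_inv_cancel₀ hnb.ne', one_smul, sub_self]
    have hZRR : frob Z (Matrix.vecMulVec (R β) (R β)) = 0 := by
      rw [hRβ]
      have h0 : Matrix.vecMulVec (0 : Vec p) (0 : Vec p) = (0 : Mat p) := by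
        ext i j
        simp [Matrix.vecMulVec_apply]
      rw [h0]
      simp [frob]
    have hmβ : dotp m β = 0 := by
      unfold dotp
      refine Finset.sum_eq_zero fun i _ => ?_
      by_cases h : β i = 0
      · rw [h]; ring
      · simp [hmdef, h]
    have hmpβ : dotp mp β = 0 := by
      unfold dotp
      refine Finset.sum_eq_zero fun i _ => ?_
      by_cases h : β i = 0
      · rw [h]; ring
      · simp [hmpdef, h]
    rw [hWfrob, htheta]
    rw [frob_vecMulVec_vecMulVec w w β β, frob_vecMulVec_vecMulVec bh z1 β β,
      frob_vecMulVec_vecMulVec z2 bh β β, frob_vecMulVec_vecMulVec bh bh β β,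
      frob_vecMulVec_vecMulVec bh m β β, frob_vecMulVec_vecMulVec mp bh β β]
    rw [hRZR β β, hZRR, hdotwβ, hmβ, hmpβ]
    ring
  have hsub : InSubdiff (s:ℝ) W (Matrix.vecMulVec β β) := by
    intro C
    have h1 : frob W C ≤ mixedNorm (s:ℝ) C := frob_le_mixedNorm _ W hpair C
    have h2 : mixedNorm (s:ℝ) (Matrix.vecMulVec β β) ≤ frob W (Matrix.vecMulVec β β) := by
      rw [hBval]; exact mixedNorm_le_theta _ _ _
    rw [frob_sub_right]
    linarith
  have hlower : (1/10) * mixedNorm (s:ℝ) A - 5 * frobNorm A ≤ frob W A := by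
    have hwwb : |frob (Matrix.vecMulVec w w) A| ≤ 4 * frobNorm A := by
      have hww : frob (Matrix.vecMulVec w w) A = dotp w (fun i => ∑ j, A i j * w j) := by
        rw [frob_vmv_left_row]
        unfold dotp
        rfl
      rw [hww]
      have h1 := abs_dotp_le_l2 w (fun i => ∑ j, A i j * w j)
      have h2 := l2_matvec_le A w
      have h3 := l2_nonneg w
      nlinarith [hF0, l2_nonneg (fun i => ∑ j, A i j * w j)]
    have hbz1 : frob (Matrix.vecMulVec bh z1) A = dotp z1 g0 := by
      rw [frob_vmv_left_col]
      unfold dotp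
      simp only [hg0def]
    have hz2f0 : frob (Matrix.vecMulVec z2 bh) A = dotp z2 f0 := by
      rw [frob_vmv_left_row]
      unfold dotp
      simp only [hf0def]
    have hbhbh : frob (Matrix.vecMulVec bh bh) A = dotp bh g0 := by
      rw [frob_vmv_left_col]
      unfold dotp
      simp only [hg0def]
    have hbm : frob (Matrix.vecMulVec bh m) A = dotp m g0 := by
      rw [frob_vmv_left_col]
      unfold dotp
      simp only [hg0def]
    have hmpbh : frob (Matrix.vecMulVec mp bh) A = dotp mp f0 := by
      rw [frob_vmv_left_row]
      unfold dotp
      simp only [hf0def]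
    have hmerge1 : dotp z1 g0 - ρ * dotp bh g0 = frob Z (Matrix.vecMulVec bh (R g0)) := by
      have hRg0 : R g0 = g0 - dotp bh g0 • bh := by simp only [hRdef]
      rw [hRg0, vecMulVec_sub_right, frob_sub_right, vecMulVec_smul_right, frob_smul_right,
        hZbhc g0, hZbhc bh]
      have hρ2 : ρ = dotp z1 bh := by rw [hρdef, hZbhc]
      rw [hρ2]
      ring
    have hz2f0' : dotp z2 f0 = frob Z (Matrix.vecMulVec f0 bh) := (hZcbh f0).symm
    have hQ1def : dotp m g0 = ∑ j ∈ offS, |g0 j| := by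
      unfold dotp
      rw [hoffSdef, Finset.sum_filter]
      refine Finset.sum_congr rfl fun j _ => ?_
      by_cases h : β j = 0
      · simp only [hmdef, h, if_true]
        exact sign_mul_self' (g0 j)
      · simp [hmdef, h]
    have hQ2def : dotp mp f0 = ∑ i ∈ offS, |f0 i| := by
      unfold dotp
      rw [hoffSdef, Finset.sum_filter]
      refine Finset.sum_congr rfl fun i _ => ?_
      by_cases h : β i = 0
      · simp only [hmpdef, h, if_true]
        exact sign_mul_self' (f0 i)
      · simp [hmpdef, h]
    have hQ10 : (0:ℝ) ≤ ∑ j ∈ offS, |g0 j| := Finset.sum_nonneg fun j _ => abs_nonneg _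
    have hQ20 : (0:ℝ) ≤ ∑ i ∈ offS, |f0 i| := Finset.sum_nonneg fun i _ => abs_nonneg _
    have hg0l2 : l2 g0 ≤ frobNorm A := by
      have h := l2_vecmat_le A bh
      rw [hl2bh, mul_one] at h
      rw [hg0def]
      exact h
    have hf0l2 : l2 f0 ≤ frobNorm A := by
      have h := l2_matvec_le A bh
      rw [hl2bh, mul_one] at h
      rw [hf0def]
      exact h
    have halbh : al bh ≤ 2 := by
      have h1 := hl1split bh
      have h2 : ∑ j ∈ offS, |bh j| = 0 := by
        refine Finset.sum_eq_zero fun j hj => ?_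
        have hβj : β j = 0 := by
          rw [hoffSdef] at hj
          simpa using (Finset.mem_filter.mp hj).2
        rw [hbhsupp j hβj, abs_zero]
      have h3 := hl1S bh
      rw [hl2bh, mul_one] at h3
      have h4 : l1 bh ≤ sv := by linarith
      have h5 : si * l1 bh ≤ si * sv := mul_le_mul_of_nonneg_left h4 hsi.le
      rw [hsisv] at h5
      have h6 : al bh = l2 bh + si * l1 bh := by rw [haldef]
      rw [h6, hl2bh]
      linarith
    have hb1 : |frob Z (Matrix.vecMulVec bh (R g0))| ≤
        2 * (2 * frobNorm A + si * ∑ j ∈ offS, |g0 j|) := by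
      have h1 := habsZ bh (R g0)
      rw [htheta] at h1
      have h2 : al (R g0) ≤ 2 * frobNorm A + si * ∑ j ∈ offS, |g0 j| := by
        have h3 := halR g0
        have h4 := hRl2 g0
        linarith
      calc |frob Z (Matrix.vecMulVec bh (R g0))| ≤ al bh * al (R g0) := h1
      _ ≤ 2 * (2 * frobNorm A + si * ∑ j ∈ offS, |g0 j|) :=
          mul_le_mul halbh h2 (hal0 _) (by norm_num)
    have hb2 : |frob Z (Matrix.vecMulVec f0 bh)| ≤
        2 * (2 * frobNorm A + si * ∑ i ∈ offS, |f0 i|) := by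
      have h1 := habsZ f0 bh
      rw [htheta] at h1
      have h2 : al f0 ≤ 2 * frobNorm A + si * ∑ i ∈ offS, |f0 i| := by
        have h3 := hl1split f0
        have h4 := hl1S f0
        have h5 : si * l1 f0 ≤ si * (sv * l2 f0 + ∑ i ∈ offS, |f0 i|) := by
          refine mul_le_mul_of_nonneg_left ?_ hsi.le
          linarith
        have h6 : si * (sv * l2 f0) = l2 f0 := by
          rw [← mul_assoc, hsisv, one_mul]
        rw [mul_add] at h5
        have h7 : al f0 = l2 f0 + si * l1 f0 := by rw [haldef]
        rw [h7]
        linarith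
      calc |frob Z (Matrix.vecMulVec f0 bh)| ≤ al f0 * al bh := h1
      _ = al bh * al f0 := mul_comm _ _
      _ ≤ 2 * (2 * frobNorm A + si * ∑ i ∈ offS, |f0 i|) :=
          mul_le_mul halbh h2 (hal0 _) (by norm_num)
    have e0 := (abs_le.mp hwwb).1
    have e1 := (abs_le.mp hb1).2
    have e2 := (abs_le.mp hb2).2
    rw [hWfrob, hZ2, hbz1, hz2f0, hbhbh, hbm, hmpbh, hQ1def, hQ2def]
    have hcomb : dotp z1 g0 + dotp z2 f0 - ρ * dotp bh g0
        = frob Z (Matrix.vecMulVec bh (R g0)) + frob Z (Matrix.vecMulVec f0 bh) := by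
      rw [← hmerge1, ← hz2f0']
      ring
    have hsiQ1 : 0 ≤ si * ∑ j ∈ offS, |g0 j| := mul_nonneg hsi.le hQ10
    have hsiQ2 : 0 ≤ si * ∑ i ∈ offS, |f0 i| := mul_nonneg hsi.le hQ20
    linarith [e0, e1, e2, hcomb, hF0]
  exact ⟨W, hsub, hlower⟩
end
end

section
/- Suppose β ∈ ℝ^p is s-sparse with support set I, let B = β ⊗ β, let w_β = β/‖β‖₂ + s^{-1/2}·sign(β), let T = { x ⊗ β + β ⊗ y : x, y ∈ ℝ^p }, and let I also denote the subspace of matrices supported on I × I. If W̃ ∈ ℝ^{p×p} satisfies ⟨W̃ u, v⟩ ≤ (1/5)·θ_s(u,v) for all u, v ∈ ℝ^p, then W = w_β ⊗ w_β + P_{T^⊥ ∩ I^⊥}(W̃) is a subgradient of the mixed atomic norm at B, where P_{T^⊥ ∩ I^⊥} is the orthogonal projection (in the Frobenius inner product) onto T^⊥ ∩ I^⊥: ⟨Wβ, β⟩ = θ_s(β,β) and ⟨Wu, v⟩ ≤ θ_s(u,v) for all u, v ∈ ℝ^p. -/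
open MeasureTheory ProbabilityTheory Finset

noncomputable section

namespace SubgradAux

variable {p : ℕ}

lemma l2_nonneg (u : Vec p) : 0 ≤ l2 u := Real.sqrt_nonneg _

lemma l2_sq (u : Vec p) : (l2 u) ^ 2 = ∑ i, (u i) ^ 2 :=
  Real.sq_sqrt (by positivity)

lemma l1_nonneg (u : Vec p) : 0 ≤ l1 u :=
  Finset.sum_nonneg fun i _ => abs_nonneg _

lemma l2_pos {β : Vec p} (hβ0 : β ≠ 0) : 0 < l2 β := by
  have h : ∃ i, β i ≠ 0 := by
    by_contra h
    push_neg at h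
    exact hβ0 (funext fun i => h i)
  obtain ⟨i, hi⟩ := h
  apply Real.sqrt_pos.mpr
  have : 0 < β i ^ 2 := by positivity
  have hle : β i ^ 2 ≤ ∑ j, β j ^ 2 :=
    Finset.single_le_sum (fun j _ => sq_nonneg (β j)) (Finset.mem_univ i)
  linarith

lemma sign_mul_self (x : ℝ) : Real.sign x * x = |x| := by
  rcases lt_trichotomy x 0 with h | h | h
  · rw [Real.sign_of_neg h, abs_of_neg h]; ring
  · simp [h]
  · rw [Real.sign_of_pos h, abs_of_pos h]; ring

lemma abs_sign_le (x : ℝ) : |Real.sign x| ≤ 1 := by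
  rcases lt_trichotomy x 0 with h | h | h
  · rw [Real.sign_of_neg h]; norm_num
  · simp [h]
  · rw [Real.sign_of_pos h]; norm_num

/-- 2-dimensional Cauchy–Schwarz. -/
lemma cs2 (a b c d : ℝ) :
    a * c + b * d ≤ Real.sqrt (a ^ 2 + b ^ 2) * Real.sqrt (c ^ 2 + d ^ 2) := by
  have key : (a * c + b * d) ^ 2 ≤ (a ^ 2 + b ^ 2) * (c ^ 2 + d ^ 2) := by
    nlinarith [sq_nonneg (a * d - b * c)]
  have h1 : a * c + b * d ≤ Real.sqrt ((a ^ 2 + b ^ 2) * (c ^ 2 + d ^ 2)) := by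
    rcases le_or_gt (a * c + b * d) 0 with h | h
    · exact h.trans (Real.sqrt_nonneg _)
    · exact (Real.le_sqrt h.le (by nlinarith)).mpr key
  rwa [Real.sqrt_mul (by positivity)] at h1

lemma le_of_sq_le_sq {x y : ℝ} (hy : 0 ≤ y) (h : x ^ 2 ≤ y ^ 2) : x ≤ y := by
  nlinarith [abs_nonneg x, le_abs_self x, sq_abs x]

set_option maxHeartbeats 1000000 in
/-- The crux scalar inequality. -/
lemma crux (Au Av ru rv qu qv x2 y2 lu1 lu2 m1 m2 : ℝ)
    (hAu : 0 ≤ Au) (hAv : 0 ≤ Av) (hqu : 0 ≤ qu) (hqv : 0 ≤ qv)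
    (hx2 : 0 ≤ x2) (hy2 : 0 ≤ y2) (hl1 : 0 ≤ lu1) (hl2 : 0 ≤ lu2)
    (hm1 : 0 ≤ m1) (hm2 : 0 ≤ m2)
    (hu : ru ^ 2 + qu ^ 2 + x2 ^ 2 ≤ Au ^ 2) (hv : rv ^ 2 + qv ^ 2 + y2 ^ 2 ≤ Av ^ 2) :
    (|ru| + lu1) * (|rv| + m1)
      + (1 / 5) * ((x2 + lu2) * (2 * qv) + (2 * qu) * (y2 + m2) + (x2 + lu2) * (y2 + m2))
      ≤ (Au + lu1 + lu2) * (Av + m1 + m2) := by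
  set a := |ru| with ha_def
  set b := |rv| with hb_def
  have ha : 0 ≤ a := abs_nonneg _
  have hb : 0 ≤ b := abs_nonneg _
  have ha2 : a ^ 2 = ru ^ 2 := sq_abs ru
  have hb2 : b ^ 2 = rv ^ 2 := sq_abs rv
  set Su := Real.sqrt (x2 ^ 2 + qu ^ 2) with hSu_def
  set Sv := Real.sqrt (qv ^ 2 + y2 ^ 2) with hSv_def
  have hSu : 0 ≤ Su := Real.sqrt_nonneg _
  have hSv : 0 ≤ Sv := Real.sqrt_nonneg _
  have hSu2 : Su ^ 2 = x2 ^ 2 + qu ^ 2 := Real.sq_sqrt (by positivity)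
  have hSv2 : Sv ^ 2 = qv ^ 2 + y2 ^ 2 := Real.sq_sqrt (by positivity)
  -- h1 : a*b + Su*Sv ≤ Au*Av
  have h1 : a * b + Su * Sv ≤ Au * Av := by
    have hcs := cs2 a Su b Sv
    have e1 : Real.sqrt (a ^ 2 + Su ^ 2) ≤ Au := by
      have : a ^ 2 + Su ^ 2 ≤ Au ^ 2 := by rw [ha2, hSu2]; linarith
      calc Real.sqrt (a ^ 2 + Su ^ 2) ≤ Real.sqrt (Au ^ 2) := Real.sqrt_le_sqrt this
        _ = Au := Real.sqrt_sq hAu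
    have e2 : Real.sqrt (b ^ 2 + Sv ^ 2) ≤ Av := by
      have : b ^ 2 + Sv ^ 2 ≤ Av ^ 2 := by rw [hb2, hSv2]; linarith
      calc Real.sqrt (b ^ 2 + Sv ^ 2) ≤ Real.sqrt (Av ^ 2) := Real.sqrt_le_sqrt this
        _ = Av := Real.sqrt_sq hAv
    exact hcs.trans (mul_le_mul e1 e2 (Real.sqrt_nonneg _) hAu)
  -- h2 : x2*qv + qu*y2 ≤ Su*Sv
  have h2 : x2 * qv + qu * y2 ≤ Su * Sv := cs2 x2 qu qv y2
  -- h3 : x2*y2 ≤ Su*Sv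
  have h3 : x2 * y2 ≤ Su * Sv := by
    have hx : x2 ≤ Su := le_of_sq_le_sq hSu (by rw [hSu2]; nlinarith)
    have hy : y2 ≤ Sv := le_of_sq_le_sq hSv (by rw [hSv2]; nlinarith)
    exact mul_le_mul hx hy hy2 hSu
  have hSS : 0 ≤ Su * Sv := mul_nonneg hSu hSv
  -- component bounds
  have haAu : a ≤ Au := le_of_sq_le_sq hAu (by rw [ha2]; nlinarith)
  have hbAv : b ≤ Av := le_of_sq_le_sq hAv (by rw [hb2]; nlinarith)
  have hquAu : qu ≤ Au := le_of_sq_le_sq hAu (by nlinarith)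
  have hx2Au : x2 ≤ Au := le_of_sq_le_sq hAu (by nlinarith)
  have hqvAv : qv ≤ Av := le_of_sq_le_sq hAv (by nlinarith)
  have hy2Av : y2 ≤ Av := le_of_sq_le_sq hAv (by nlinarith)
  have P4 : a * m1 ≤ Au * m1 := mul_le_mul_of_nonneg_right haAu hm1
  have P5 : lu1 * b ≤ lu1 * Av := mul_le_mul_of_nonneg_left hbAv hl1
  have P6 : lu2 * qv ≤ lu2 * Av := mul_le_mul_of_nonneg_left hqvAv hl2
  have P7 : lu2 * y2 ≤ lu2 * Av := mul_le_mul_of_nonneg_left hy2Av hl2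
  have P8 : qu * m2 ≤ Au * m2 := mul_le_mul_of_nonneg_right hquAu hm2
  have P9 : x2 * m2 ≤ Au * m2 := mul_le_mul_of_nonneg_right hx2Au hm2
  have P10 : 0 ≤ lu1 * m2 := mul_nonneg hl1 hm2
  have P11 : 0 ≤ lu2 * m1 := mul_nonneg hl2 hm1
  have P12 : 0 ≤ lu2 * m2 := mul_nonneg hl2 hm2
  have key : a * b + (2 / 5) * (x2 * qv + qu * y2) + (1 / 5) * (x2 * y2) ≤ Au * Av := by
    linarith [h1, h2, h3, hSS]
  linarith [key, P4, P5, P6, P7, P8, P9, P10, P11, P12, mul_nonneg hl1 hm1,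
    mul_nonneg hAu hm2, mul_nonneg hl2 hAv]

/-- frob is additive on the right. -/
lemma frob_add_right (M A B : Mat p) : frob M (A + B) = frob M A + frob M B := by
  simp [frob, Matrix.add_apply, mul_add, Finset.sum_add_distrib]

lemma frob_add_left (A B M : Mat p) : frob (A + B) M = frob A M + frob B M := by
  simp [frob, Matrix.add_apply, add_mul, Finset.sum_add_distrib]

lemma frob_sub_left (A B M : Mat p) : frob (A - B) M = frob A M - frob B M := by
  simp [frob, Matrix.sub_apply, sub_mul, Finset.sum_sub_distrib]

lemma dotp_mulVec_frob (M : Mat p) (u v : Vec p) :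
    dotp (M.mulVec u) v = frob M (Matrix.vecMulVec v u) := by
  unfold dotp frob
  simp only [Matrix.vecMulVec_apply, Matrix.mulVec, dotProduct]
  refine Finset.sum_congr rfl fun i _ => ?_
  rw [Finset.sum_mul]
  exact Finset.sum_congr rfl fun j _ => by ring

lemma frob_vmv_vmv (a b c d : Vec p) :
    frob (Matrix.vecMulVec a b) (Matrix.vecMulVec c d) = dotp a c * dotp b d := by
  unfold frob dotp
  simp only [Matrix.vecMulVec_apply]
  rw [Finset.sum_mul_sum]
  refine Finset.sum_congr rfl fun i _ => Finset.sum_congr rfl fun j _ => by ring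

lemma dotp_comm (u v : Vec p) : dotp u v = dotp v u := by
  unfold dotp; exact Finset.sum_congr rfl fun i _ => by ring

/-- Sparse Cauchy–Schwarz : if z is supported on the support of an s-sparse β,
then `l1 z ≤ √s * l2 z`. -/
lemma sparse_l1 {s : ℕ} {β : Vec p} (hβ : IsSparse s β) (z : Vec p)
    (hz : ∀ i, β i = 0 → z i = 0) : l1 z ≤ Real.sqrt s * l2 z := by
  classical
  set If : Finset (Fin p) := Finset.univ.filter (fun i => β i ≠ 0) with hIf
  have hset : {i | β i ≠ 0} = (↑If : Set (Fin p)) := by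
    ext i; simp [hIf]
  have hcard : (If.card : ℝ) ≤ (s : ℝ) := by
    have := hβ
    rw [IsSparse, hset, Set.ncard_coe_finset] at this
    exact_mod_cast this
  have hl1 : l1 z = ∑ i ∈ If, |z i| := by
    rw [l1]
    rw [← Finset.sum_filter_add_sum_filter_not Finset.univ (fun i => β i ≠ 0)]
    have : ∑ i ∈ Finset.univ.filter (fun i => ¬ β i ≠ 0), |z i| = 0 := by
      apply Finset.sum_eq_zero
      intro i hi
      simp only [Finset.mem_filter, not_not] at hi
      rw [hz i hi.2, abs_zero]
    rw [this, add_zero]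
  have hcs : ∑ i ∈ If, 1 * |z i| ≤
      Real.sqrt (∑ i ∈ If, (1 : ℝ) ^ 2) * Real.sqrt (∑ i ∈ If, |z i| ^ 2) :=
    Real.sum_mul_le_sqrt_mul_sqrt If (fun _ => (1 : ℝ)) (fun i => |z i|)
  have e1 : Real.sqrt (∑ i ∈ If, (1 : ℝ) ^ 2) ≤ Real.sqrt s := by
    apply Real.sqrt_le_sqrt
    simp only [one_pow, Finset.sum_const, nsmul_eq_mul, mul_one]
    exact hcard
  have e2 : Real.sqrt (∑ i ∈ If, |z i| ^ 2) ≤ l2 z := by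
    rw [l2]
    apply Real.sqrt_le_sqrt
    have : ∑ i ∈ If, |z i| ^ 2 = ∑ i ∈ If, (z i) ^ 2 :=
      Finset.sum_congr rfl fun i _ => sq_abs _
    rw [this]
    exact Finset.sum_le_sum_of_subset_of_nonneg (Finset.subset_univ If)
      (fun i _ _ => sq_nonneg _)
  calc l1 z = ∑ i ∈ If, 1 * |z i| := by rw [hl1]; exact Finset.sum_congr rfl fun i _ => (one_mul _).symm
    _ ≤ _ := hcs
    _ ≤ Real.sqrt s * l2 z := by
        apply mul_le_mul e1 e2 (Real.sqrt_nonneg _) (Real.sqrt_nonneg _)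

/-- Restriction of `z` to the support of `β`. -/
def rI (β z : Vec p) : Vec p := fun i => if β i = 0 then 0 else z i

/-- Restriction of `z` to the complement of the support of `β`. -/
def rC (β z : Vec p) : Vec p := fun i => if β i = 0 then z i else 0

/-- Orthogonal projection of `z` onto the complement of the span of `β`. -/
def prj (β z : Vec p) : Vec p := fun i => z i - dotp z β / (l2 β) ^ 2 * β i

/-- The `I`-part of the projection. -/
def prjI (β z : Vec p) : Vec p := rI β (prj β z)

lemma dotp_rC_beta (β z : Vec p) : dotp (rC β z) β = 0 := by
  apply Finset.sum_eq_zero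
  intro i _
  by_cases hi : β i = 0 <;> simp [rC, hi]

lemma dotp_prj_beta (β z : Vec p) (hβ0 : β ≠ 0) : dotp (prj β z) β = 0 := by
  have hnb : l2 β ≠ 0 := ne_of_gt (l2_pos hβ0)
  have hsum : ∑ i, β i * β i = (l2 β) ^ 2 := by
    rw [l2_sq]; exact Finset.sum_congr rfl fun i _ => (sq (β i)).symm
  have e : ∀ i, (z i - dotp z β / (l2 β) ^ 2 * β i) * β i
      = z i * β i - dotp z β / (l2 β) ^ 2 * (β i * β i) := fun i => by ring
  unfold dotp prj
  rw [Finset.sum_congr rfl fun i _ => e i, Finset.sum_sub_distrib, ← Finset.mul_sum, hsum]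
  have : dotp z β = ∑ i, z i * β i := rfl
  rw [← this]
  field_simp
  ring

lemma dotp_prjI_beta (β z : Vec p) (hβ0 : β ≠ 0) : dotp (prjI β z) β = 0 := by
  have h : dotp (prjI β z) β = dotp (prj β z) β := by
    apply Finset.sum_congr rfl
    intro i _
    by_cases hi : β i = 0 <;> simp [prjI, rI, hi]
  rw [h, dotp_prj_beta β z hβ0]

lemma dotp_prjI_rC (β z y : Vec p) : ∑ i, prjI β z i * rC β y i = 0 := by
  apply Finset.sum_eq_zero
  intro i _
  by_cases hi : β i = 0 <;> simp [prjI, rI, rC, hi]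

lemma l1_split (β u : Vec p) : l1 u = l1 (rI β u) + l1 (rC β u) := by
  unfold l1
  rw [← Finset.sum_add_distrib]
  refine Finset.sum_congr rfl fun i _ => ?_
  by_cases hi : β i = 0 <;> simp [rI, rC, hi]

lemma abs_dotp_sign (β u : Vec p) :
    |∑ i, Real.sign (β i) * u i| ≤ l1 (rI β u) := by
  have h1 : |∑ i, Real.sign (β i) * u i| ≤ ∑ i, |Real.sign (β i) * u i| :=
    Finset.abs_sum_le_sum_abs _ _
  have h2 : ∀ i : Fin p, |Real.sign (β i) * u i| ≤ |rI β u i| := by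
    intro i
    by_cases hi : β i = 0
    · simp [rI, hi]
    · rw [abs_mul]
      simp only [rI, if_neg hi]
      calc |Real.sign (β i)| * |u i| ≤ 1 * |u i| :=
        mul_le_mul_of_nonneg_right (abs_sign_le _) (abs_nonneg _)
        _ = |u i| := one_mul _
  exact h1.trans (Finset.sum_le_sum fun i _ => h2 i)

/-- Pythagoras for the decomposition `z = (dotp z β/‖β‖²)β + prjI β z + rC β z`. -/
lemma pyth (β z : Vec p) (hβ0 : β ≠ 0) :
    (dotp z β / l2 β) ^ 2 + (l2 (prjI β z)) ^ 2 + (l2 (rC β z)) ^ 2 = (l2 z) ^ 2 := by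
  have hnb : l2 β ≠ 0 := ne_of_gt (l2_pos hβ0)
  have hzdecomp : ∀ i, z i = dotp z β / (l2 β) ^ 2 * β i + prjI β z i + rC β z i := by
    intro i
    by_cases hi : β i = 0
    · simp [prjI, rI, rC, prj, hi]
    · simp only [prjI, rI, rC, prj, if_neg hi]
      ring
  have key : ∑ i, z i ^ 2 =
      (dotp z β / (l2 β) ^ 2) ^ 2 * (∑ i, β i ^ 2) + (∑ i, prjI β z i ^ 2)
        + (∑ i, rC β z i ^ 2)
        + 2 * (dotp z β / (l2 β) ^ 2) * (∑ i, prjI β z i * β i)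
        + 2 * (dotp z β / (l2 β) ^ 2) * (∑ i, rC β z i * β i)
        + 2 * (∑ i, prjI β z i * rC β z i) := by
    have e : ∀ i : Fin p, z i ^ 2 =
        (dotp z β / (l2 β) ^ 2) ^ 2 * β i ^ 2 + prjI β z i ^ 2 + rC β z i ^ 2
          + 2 * (dotp z β / (l2 β) ^ 2) * (prjI β z i * β i)
          + 2 * (dotp z β / (l2 β) ^ 2) * (rC β z i * β i)
          + 2 * (prjI β z i * rC β z i) := by
      intro i
      conv_lhs => rw [hzdecomp i]
      ring
    rw [Finset.sum_congr rfl fun i _ => e i]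
    simp only [Finset.sum_add_distrib, ← Finset.mul_sum]
  have c1 : ∑ i, prjI β z i * β i = 0 := dotp_prjI_beta β z hβ0
  have c2 : ∑ i, rC β z i * β i = 0 := dotp_rC_beta β z
  have c3 : ∑ i, prjI β z i * rC β z i = 0 := dotp_prjI_rC β z z
  rw [c1, c2, c3] at key
  have hβsum : ∑ i, β i ^ 2 = (l2 β) ^ 2 := (l2_sq β).symm
  rw [hβsum] at key
  rw [l2_sq z, key, l2_sq, l2_sq]
  field_simp
  ring

end SubgradAux

/-- Lemma A.2, case 3. Adding the orthogonal projection onto `T^⊥ ∩ I^⊥` of any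
matrix `W̃` with `⟨W̃u,v⟩ ≤ (1/5)θ_s(u,v)` to `w_β ⊗ w_β` gives a subgradient of the mixed
atomic norm at `β ⊗ β`.  Here `Wp` is characterized as the orthogonal projection (in the
Frobenius inner product) of `Wt` onto `T^⊥ ∩ I^⊥`, where `T = {x⊗β + β⊗y}` and `I` is the
subspace of matrices supported on `I × I` for `I` the support of `β`. -/
theorem subgradient_case_three {p s : ℕ} (hs : 0 < s) (β : Vec p)
    (hβ : IsSparse s β) (hβ0 : β ≠ 0) (Wt Wp : Mat p)
    (hWt : ∀ u v : Vec p, dotp (Wt.mulVec u) v ≤ (1 / 5) * theta (s : ℝ) u v)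
    -- `Wp` lies in `T^⊥` :
    (hWp_T : ∀ x y : Vec p, frob Wp (Matrix.vecMulVec x β + Matrix.vecMulVec β y) = 0)
    -- `Wp` lies in `I^⊥` :
    (hWp_I : ∀ i j, β i ≠ 0 → β j ≠ 0 → Wp i j = 0)
    -- `Wt - Wp` is orthogonal to `T^⊥ ∩ I^⊥`, so `Wp` is the orthogonal projection of `Wt` :
    (hproj : ∀ N : Mat p,
      (∀ x y : Vec p, frob N (Matrix.vecMulVec x β + Matrix.vecMulVec β y) = 0) →
      (∀ i j, β i ≠ 0 → β j ≠ 0 → N i j = 0) →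
      frob (Wt - Wp) N = 0) :
    let w : Vec p := fun i => β i / l2 β + (Real.sqrt (s : ℝ))⁻¹ * Real.sign (β i)
    let W : Mat p := Matrix.vecMulVec w w + Wp
    dotp (W.mulVec β) β = theta (s : ℝ) β β ∧
    ∀ u v : Vec p, dotp (W.mulVec u) v ≤ theta (s : ℝ) u v := by
  intro w W
  have hw : w = fun i => β i / l2 β + (Real.sqrt (s : ℝ))⁻¹ * Real.sign (β i) := rfl
  have hW : W = Matrix.vecMulVec w w + Wp := rfl
  have hnb : 0 < l2 β := SubgradAux.l2_pos hβ0
  have hnb' : l2 β ≠ 0 := ne_of_gt hnb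
  have hsqs : 0 < Real.sqrt (s : ℝ) := Real.sqrt_pos.mpr (by exact_mod_cast hs)
  have hc : (0:ℝ) ≤ (Real.sqrt (s : ℝ))⁻¹ := inv_nonneg.mpr (Real.sqrt_nonneg _)
  have hcs : (Real.sqrt (s : ℝ))⁻¹ * Real.sqrt (s : ℝ) = 1 :=
    inv_mul_cancel₀ (ne_of_gt hsqs)
  -- general expansion of the quadratic form of W
  have hexp : ∀ u v : Vec p, dotp (W.mulVec u) v
      = dotp w v * dotp w u + frob Wp (Matrix.vecMulVec v u) := by
    intro u v
    rw [hW, Matrix.add_mulVec]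
    have hsplit : dotp ((Matrix.vecMulVec w w).mulVec u + Wp.mulVec u) v
        = dotp ((Matrix.vecMulVec w w).mulVec u) v + dotp (Wp.mulVec u) v := by
      unfold dotp
      rw [← Finset.sum_add_distrib]
      exact Finset.sum_congr rfl fun i _ => by simp [add_mul]
    rw [hsplit, SubgradAux.dotp_mulVec_frob (Matrix.vecMulVec w w) u v,
      SubgradAux.frob_vmv_vmv, SubgradAux.dotp_mulVec_frob Wp u v]
  -- value of dotp w β
  have hwβ : dotp w β = l2 β + (Real.sqrt (s : ℝ))⁻¹ * l1 β := by
    have e : ∀ i, w i * β i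
        = β i ^ 2 / l2 β + (Real.sqrt (s : ℝ))⁻¹ * (Real.sign (β i) * β i) := by
      intro i; rw [hw]; ring
    have e' : ∀ i : Fin p, w i * β i
        = β i ^ 2 / l2 β + (Real.sqrt (s : ℝ))⁻¹ * |β i| := by
      intro i; rw [e i, SubgradAux.sign_mul_self]
    unfold dotp
    rw [Finset.sum_congr rfl fun i _ => e' i, Finset.sum_add_distrib,
      ← Finset.sum_div, ← Finset.mul_sum]
    have h2 : ∑ i, β i ^ 2 = (l2 β) ^ 2 := (SubgradAux.l2_sq β).symm
    rw [h2]
    have : (l2 β) ^ 2 / l2 β = l2 β := by field_simp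
    rw [this]
    rfl
  constructor
  · -- Part 1 : equality at β
    rw [hexp β β]
    have h0 : frob Wp (Matrix.vecMulVec β β) = 0 := by
      have h := hWp_T β 0
      have hz : Matrix.vecMulVec β (0 : Vec p) = 0 := by
        ext i j; simp [Matrix.vecMulVec_apply]
      rw [hz, add_zero] at h
      exact h
    rw [h0, add_zero, hwβ]
    unfold theta
    ring
  · -- Part 2 : subgradient inequality
    intro u v
    rw [hexp u v]
    -- Step (a) : kill the T-component
    have M1 : Matrix.vecMulVec v u =
        (Matrix.vecMulVec (fun i => dotp u β / (l2 β) ^ 2 * v i) β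
          + Matrix.vecMulVec β
            (fun j => dotp v β / (l2 β) ^ 2 * u j
              - dotp v β / (l2 β) ^ 2 * (dotp u β / (l2 β) ^ 2) * β j))
          + Matrix.vecMulVec (SubgradAux.prj β v) (SubgradAux.prj β u) := by
      ext i j
      simp only [Matrix.add_apply, Matrix.vecMulVec_apply, SubgradAux.prj]
      ring
    have step_a : frob Wp (Matrix.vecMulVec v u)
        = frob Wp (Matrix.vecMulVec (SubgradAux.prj β v) (SubgradAux.prj β u)) := by
      rw [M1, SubgradAux.frob_add_right, hWp_T _ _, zero_add]
    -- Step (b) : kill the I × I component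
    have M2 : Matrix.vecMulVec (SubgradAux.prj β v) (SubgradAux.prj β u) =
        Matrix.vecMulVec (SubgradAux.prjI β v) (SubgradAux.prjI β u)
          + (Matrix.vecMulVec (SubgradAux.prjI β v) (SubgradAux.rC β u)
            + Matrix.vecMulVec (SubgradAux.rC β v) (SubgradAux.prjI β u)
            + Matrix.vecMulVec (SubgradAux.rC β v) (SubgradAux.rC β u)) := by
      ext i j
      by_cases hi : β i = 0 <;> by_cases hj : β j = 0 <;>
        simp only [Matrix.add_apply, Matrix.vecMulVec_apply, SubgradAux.prjI,
          SubgradAux.rI, SubgradAux.rC, SubgradAux.prj, if_pos, if_neg, hi, hj,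
          if_true, if_false, ite_true, ite_false] <;>
        simp [hi, hj] <;> ring
    have hfrobI : frob Wp
        (Matrix.vecMulVec (SubgradAux.prjI β v) (SubgradAux.prjI β u)) = 0 := by
      unfold frob
      apply Finset.sum_eq_zero; intro i _
      apply Finset.sum_eq_zero; intro j _
      by_cases hi : β i = 0
      · simp [Matrix.vecMulVec_apply, SubgradAux.prjI, SubgradAux.rI, hi]
      · by_cases hj : β j = 0
        · simp [Matrix.vecMulVec_apply, SubgradAux.prjI, SubgradAux.rI, hj]
        · simp [hWp_I i j hi hj]
    have step_b : frob Wp (Matrix.vecMulVec (SubgradAux.prj β v) (SubgradAux.prj β u))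
        = frob Wp (Matrix.vecMulVec (SubgradAux.prjI β v) (SubgradAux.rC β u)
            + Matrix.vecMulVec (SubgradAux.rC β v) (SubgradAux.prjI β u)
            + Matrix.vecMulVec (SubgradAux.rC β v) (SubgradAux.rC β u)) := by
      rw [M2, SubgradAux.frob_add_right, hfrobI, zero_add]
    -- Step (c) : replace Wp by Wt on the remaining part
    have hNT : ∀ x y : Vec p,
        frob (Matrix.vecMulVec (SubgradAux.prjI β v) (SubgradAux.rC β u)
            + Matrix.vecMulVec (SubgradAux.rC β v) (SubgradAux.prjI β u)
            + Matrix.vecMulVec (SubgradAux.rC β v) (SubgradAux.rC β u))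
          (Matrix.vecMulVec x β + Matrix.vecMulVec β y) = 0 := by
      intro x y
      simp only [SubgradAux.frob_add_right, SubgradAux.frob_add_left,
        SubgradAux.frob_vmv_vmv]
      rw [SubgradAux.dotp_rC_beta β u, SubgradAux.dotp_rC_beta β v,
        SubgradAux.dotp_prjI_beta β u hβ0, SubgradAux.dotp_prjI_beta β v hβ0]
      ring
    have hNI : ∀ i j, β i ≠ 0 → β j ≠ 0 →
        (Matrix.vecMulVec (SubgradAux.prjI β v) (SubgradAux.rC β u)
            + Matrix.vecMulVec (SubgradAux.rC β v) (SubgradAux.prjI β u)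
            + Matrix.vecMulVec (SubgradAux.rC β v) (SubgradAux.rC β u)) i j = 0 := by
      intro i j hi hj
      simp [Matrix.add_apply, Matrix.vecMulVec_apply, SubgradAux.rC, hi, hj]
    have hWpN : frob Wp (Matrix.vecMulVec (SubgradAux.prjI β v) (SubgradAux.rC β u)
            + Matrix.vecMulVec (SubgradAux.rC β v) (SubgradAux.prjI β u)
            + Matrix.vecMulVec (SubgradAux.rC β v) (SubgradAux.rC β u))
        = frob Wt (Matrix.vecMulVec (SubgradAux.prjI β v) (SubgradAux.rC β u)
            + Matrix.vecMulVec (SubgradAux.rC β v) (SubgradAux.prjI β u)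
            + Matrix.vecMulVec (SubgradAux.rC β v) (SubgradAux.rC β u)) := by
      have h := hproj _ hNT hNI
      rw [SubgradAux.frob_sub_left] at h
      linarith
    -- Step (d) : bound the Wt part using hWt
    have hWtN : frob Wt (Matrix.vecMulVec (SubgradAux.prjI β v) (SubgradAux.rC β u)
            + Matrix.vecMulVec (SubgradAux.rC β v) (SubgradAux.prjI β u)
            + Matrix.vecMulVec (SubgradAux.rC β v) (SubgradAux.rC β u))
        = dotp (Wt.mulVec (SubgradAux.rC β u)) (SubgradAux.prjI β v)
          + dotp (Wt.mulVec (SubgradAux.prjI β u)) (SubgradAux.rC β v)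
          + dotp (Wt.mulVec (SubgradAux.rC β u)) (SubgradAux.rC β v) := by
      rw [SubgradAux.frob_add_right, SubgradAux.frob_add_right,
        ← SubgradAux.dotp_mulVec_frob, ← SubgradAux.dotp_mulVec_frob,
        ← SubgradAux.dotp_mulVec_frob]
    have hWp_le : frob Wp (Matrix.vecMulVec v u) ≤
        (1 / 5) * (theta (s : ℝ) (SubgradAux.rC β u) (SubgradAux.prjI β v)
          + theta (s : ℝ) (SubgradAux.prjI β u) (SubgradAux.rC β v)
          + theta (s : ℝ) (SubgradAux.rC β u) (SubgradAux.rC β v)) := by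
      rw [step_a, step_b, hWpN, hWtN]
      linarith [hWt (SubgradAux.rC β u) (SubgradAux.prjI β v),
        hWt (SubgradAux.prjI β u) (SubgradAux.rC β v),
        hWt (SubgradAux.rC β u) (SubgradAux.rC β v)]
    -- scalar quantities
    set Au := l2 u with hAu_def
    set Av := l2 v with hAv_def
    set qu := l2 (SubgradAux.prjI β u) with hqu_def
    set qv := l2 (SubgradAux.prjI β v) with hqv_def
    set x2 := l2 (SubgradAux.rC β u) with hx2_def
    set y2 := l2 (SubgradAux.rC β v) with hy2_def
    set lu1 := (Real.sqrt (s : ℝ))⁻¹ * l1 (SubgradAux.rI β u) with hlu1_def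
    set lu2 := (Real.sqrt (s : ℝ))⁻¹ * l1 (SubgradAux.rC β u) with hlu2_def
    set m1 := (Real.sqrt (s : ℝ))⁻¹ * l1 (SubgradAux.rI β v) with hm1_def
    set m2 := (Real.sqrt (s : ℝ))⁻¹ * l1 (SubgradAux.rC β v) with hm2_def
    set ru := dotp u β / l2 β with hru_def
    set rv := dotp v β / l2 β with hrv_def
    have hAu0 : 0 ≤ Au := SubgradAux.l2_nonneg u
    have hAv0 : 0 ≤ Av := SubgradAux.l2_nonneg v
    have hqu0 : 0 ≤ qu := SubgradAux.l2_nonneg _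
    have hqv0 : 0 ≤ qv := SubgradAux.l2_nonneg _
    have hx20 : 0 ≤ x2 := SubgradAux.l2_nonneg _
    have hy20 : 0 ≤ y2 := SubgradAux.l2_nonneg _
    have hlu10 : 0 ≤ lu1 := mul_nonneg hc (SubgradAux.l1_nonneg _)
    have hlu20 : 0 ≤ lu2 := mul_nonneg hc (SubgradAux.l1_nonneg _)
    have hm10 : 0 ≤ m1 := mul_nonneg hc (SubgradAux.l1_nonneg _)
    have hm20 : 0 ≤ m2 := mul_nonneg hc (SubgradAux.l1_nonneg _)
    -- sparse bound on the I-part of the projections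
    have hsparse_u : (Real.sqrt (s : ℝ))⁻¹ * l1 (SubgradAux.prjI β u) ≤ qu := by
      have h := SubgradAux.sparse_l1 hβ (SubgradAux.prjI β u)
        (fun i hi => by simp [SubgradAux.prjI, SubgradAux.rI, hi])
      calc (Real.sqrt (s : ℝ))⁻¹ * l1 (SubgradAux.prjI β u)
          ≤ (Real.sqrt (s : ℝ))⁻¹ * (Real.sqrt (s : ℝ) * l2 (SubgradAux.prjI β u)) :=
            mul_le_mul_of_nonneg_left h hc
        _ = qu := by rw [← mul_assoc, hcs, one_mul]
    have hsparse_v : (Real.sqrt (s : ℝ))⁻¹ * l1 (SubgradAux.prjI β v) ≤ qv := by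
      have h := SubgradAux.sparse_l1 hβ (SubgradAux.prjI β v)
        (fun i hi => by simp [SubgradAux.prjI, SubgradAux.rI, hi])
      calc (Real.sqrt (s : ℝ))⁻¹ * l1 (SubgradAux.prjI β v)
          ≤ (Real.sqrt (s : ℝ))⁻¹ * (Real.sqrt (s : ℝ) * l2 (SubgradAux.prjI β v)) :=
            mul_le_mul_of_nonneg_left h hc
        _ = qv := by rw [← mul_assoc, hcs, one_mul]
    -- theta bounds
    have hth1 : theta (s : ℝ) (SubgradAux.rC β u) (SubgradAux.prjI β v)
        ≤ (x2 + lu2) * (2 * qv) := by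
      unfold theta
      apply mul_le_mul_of_nonneg_left _ (by linarith : (0:ℝ) ≤ x2 + lu2)
      linarith [hsparse_v]
    have hth2 : theta (s : ℝ) (SubgradAux.prjI β u) (SubgradAux.rC β v)
        ≤ (2 * qu) * (y2 + m2) := by
      unfold theta
      apply mul_le_mul_of_nonneg_right _ (by linarith : (0:ℝ) ≤ y2 + m2)
      linarith [hsparse_u]
    have hth3 : theta (s : ℝ) (SubgradAux.rC β u) (SubgradAux.rC β v)
        = (x2 + lu2) * (y2 + m2) := rfl
    -- bound on the w-products
    have hwu : |dotp w u| ≤ |ru| + lu1 := by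
      have e : dotp w u = dotp u β / l2 β
          + (Real.sqrt (s : ℝ))⁻¹ * (∑ i, Real.sign (β i) * u i) := by
        unfold dotp
        rw [hw]
        have e2 : ∀ i : Fin p,
            (β i / l2 β + (Real.sqrt (s : ℝ))⁻¹ * Real.sign (β i)) * u i
            = u i * β i / l2 β + (Real.sqrt (s : ℝ))⁻¹ * (Real.sign (β i) * u i) := by
          intro i; ring
        rw [Finset.sum_congr rfl fun i _ => e2 i, Finset.sum_add_distrib,
          ← Finset.sum_div, ← Finset.mul_sum]
      rw [e, hru_def]
      calc |dotp u β / l2 β + (Real.sqrt (s : ℝ))⁻¹ * (∑ i, Real.sign (β i) * u i)|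
          ≤ |dotp u β / l2 β| + |(Real.sqrt (s : ℝ))⁻¹ * (∑ i, Real.sign (β i) * u i)| :=
            abs_add_le _ _
        _ ≤ |dotp u β / l2 β| + lu1 := by
            have h0 := SubgradAux.abs_dotp_sign β u
            have h2 : |(Real.sqrt (s : ℝ))⁻¹ * (∑ i, Real.sign (β i) * u i)|
                = (Real.sqrt (s : ℝ))⁻¹ * |∑ i, Real.sign (β i) * u i| := by
              rw [abs_mul, abs_of_nonneg hc]
            have h3 : (Real.sqrt (s : ℝ))⁻¹ * |∑ i, Real.sign (β i) * u i|
                ≤ (Real.sqrt (s : ℝ))⁻¹ * l1 (SubgradAux.rI β u) :=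
              mul_le_mul_of_nonneg_left h0 hc
            rw [h2, hlu1_def]
            linarith
    have hwv : |dotp w v| ≤ |rv| + m1 := by
      have e : dotp w v = dotp v β / l2 β
          + (Real.sqrt (s : ℝ))⁻¹ * (∑ i, Real.sign (β i) * v i) := by
        unfold dotp
        rw [hw]
        have e2 : ∀ i : Fin p,
            (β i / l2 β + (Real.sqrt (s : ℝ))⁻¹ * Real.sign (β i)) * v i
            = v i * β i / l2 β + (Real.sqrt (s : ℝ))⁻¹ * (Real.sign (β i) * v i) := by
          intro i; ring
        rw [Finset.sum_congr rfl fun i _ => e2 i, Finset.sum_add_distrib,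
          ← Finset.sum_div, ← Finset.mul_sum]
      rw [e, hrv_def]
      calc |dotp v β / l2 β + (Real.sqrt (s : ℝ))⁻¹ * (∑ i, Real.sign (β i) * v i)|
          ≤ |dotp v β / l2 β| + |(Real.sqrt (s : ℝ))⁻¹ * (∑ i, Real.sign (β i) * v i)| :=
            abs_add_le _ _
        _ ≤ |dotp v β / l2 β| + m1 := by
            have h0 := SubgradAux.abs_dotp_sign β v
            have h2 : |(Real.sqrt (s : ℝ))⁻¹ * (∑ i, Real.sign (β i) * v i)|
                = (Real.sqrt (s : ℝ))⁻¹ * |∑ i, Real.sign (β i) * v i| := by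
              rw [abs_mul, abs_of_nonneg hc]
            have h3 : (Real.sqrt (s : ℝ))⁻¹ * |∑ i, Real.sign (β i) * v i|
                ≤ (Real.sqrt (s : ℝ))⁻¹ * l1 (SubgradAux.rI β v) :=
              mul_le_mul_of_nonneg_left h0 hc
            rw [h2, hm1_def]
            linarith
    have hprod : dotp w v * dotp w u ≤ (|ru| + lu1) * (|rv| + m1) := by
      calc dotp w v * dotp w u ≤ |dotp w v * dotp w u| := le_abs_self _
        _ = |dotp w u| * |dotp w v| := by rw [abs_mul, mul_comm]
        _ ≤ (|ru| + lu1) * (|rv| + m1) :=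
            mul_le_mul hwu hwv (abs_nonneg _) (by positivity)
    -- Pythagoras
    have hpu : ru ^ 2 + qu ^ 2 + x2 ^ 2 ≤ Au ^ 2 :=
      le_of_eq (SubgradAux.pyth β u hβ0)
    have hpv : rv ^ 2 + qv ^ 2 + y2 ^ 2 ≤ Av ^ 2 :=
      le_of_eq (SubgradAux.pyth β v hβ0)
    -- the crux inequality
    have hcrux := SubgradAux.crux Au Av ru rv qu qv x2 y2 lu1 lu2 m1 m2
      hAu0 hAv0 hqu0 hqv0 hx20 hy20 hlu10 hlu20 hm10 hm20 hpu hpv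
    -- theta of u, v
    have hthuv : theta (s : ℝ) u v = (Au + lu1 + lu2) * (Av + m1 + m2) := by
      unfold theta
      rw [SubgradAux.l1_split β u, SubgradAux.l1_split β v]
      rw [hlu1_def, hlu2_def, hm1_def, hm2_def, hAu_def, hAv_def]
      ring
    rw [hthuv]
    calc dotp w v * dotp w u + frob Wp (Matrix.vecMulVec v u)
        ≤ (|ru| + lu1) * (|rv| + m1)
          + (1 / 5) * ((x2 + lu2) * (2 * qv) + (2 * qu) * (y2 + m2)
            + (x2 + lu2) * (y2 + m2)) := by
          have h15 : (0:ℝ) ≤ 1/5 := by norm_num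
          linarith [hWp_le, hth1, hth2, hprod,
            mul_le_mul_of_nonneg_left (add_le_add (add_le_add hth1 hth2) (le_of_eq hth3)) h15]
      _ ≤ (Au + lu1 + lu2) * (Av + m1 + m2) := hcrux
end
end
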